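/- arXiv:1301.7196 — 7 statements merged into one kernel-verified Lean document; each statement's English description precedes it below -/
import Mathlib

section
/- For every integer k ≥ 2 and all numbers A, B > 0 (or more generally commuting elements of a ring) and every s with 0 ≤ s ≤ n, the Bergström identity holds: A^n = Σ_{m=0}^{s} C(n,m) B^{n-m}(A-B)^m + Σ_{m=s+1}^{n} C(m-1,s) A^{n-m}(A-B)^{s+1} B^{m-s-1}. -/
lemma berg_step {R : Type*} [CommRing R] (A B : R) (s : ℕ) :
    ∀ n, s + 1 ≤ n →
    ∑ m ∈ Finset.Icc (s + 1) n,
        ((m - 1).choose s : R) * A ^ (n - m) * (A - B) ^ (s + 1) * B ^ (m - s - 1)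
    = (n.choose (s + 1) : R) * B ^ (n - (s + 1)) * (A - B) ^ (s + 1)
      + ∑ m ∈ Finset.Icc (s + 1 + 1) n,
          ((m - 1).choose (s + 1) : R) * A ^ (n - m) * (A - B) ^ (s + 1 + 1)
            * B ^ (m - (s + 1) - 1) := by
  intro n hn
  induction n, hn using Nat.le_induction with
  | base =>
      rw [Finset.Icc_self, Finset.sum_singleton,
        Finset.Icc_eq_empty (by omega), Finset.sum_empty]
      simp
  | succ n hn ih =>
      rw [Finset.sum_Icc_succ_top (by omega : s + 1 ≤ n + 1),
        Finset.sum_Icc_succ_top (by omega : s + 1 + 1 ≤ n + 1)]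
      have h1 : ∑ m ∈ Finset.Icc (s + 1) n,
          ((m - 1).choose s : R) * A ^ (n + 1 - m) * (A - B) ^ (s + 1) * B ^ (m - s - 1)
          = A * ∑ m ∈ Finset.Icc (s + 1) n,
              ((m - 1).choose s : R) * A ^ (n - m) * (A - B) ^ (s + 1) * B ^ (m - s - 1) := by
        rw [Finset.mul_sum]
        refine Finset.sum_congr rfl fun m hm => ?_
        simp only [Finset.mem_Icc] at hm
        have hnm : n + 1 - m = (n - m) + 1 := by omega
        rw [hnm, pow_succ]; ring
      have h2 : ∑ m ∈ Finset.Icc (s + 1 + 1) n,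
          ((m - 1).choose (s + 1) : R) * A ^ (n + 1 - m) * (A - B) ^ (s + 1 + 1)
            * B ^ (m - (s + 1) - 1)
          = A * ∑ m ∈ Finset.Icc (s + 1 + 1) n,
              ((m - 1).choose (s + 1) : R) * A ^ (n - m) * (A - B) ^ (s + 1 + 1)
                * B ^ (m - (s + 1) - 1) := by
        rw [Finset.mul_sum]
        refine Finset.sum_congr rfl fun m hm => ?_
        simp only [Finset.mem_Icc] at hm
        have hnm : n + 1 - m = (n - m) + 1 := by omega
        rw [hnm, pow_succ]; ring
      rw [h1, h2, ih]
      have e1 : n + 1 - (n + 1) = 0 := by omega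
      have e2 : n + 1 - s - 1 = n - s := by omega
      have e3 : n + 1 - (s + 1) = n - s := by omega
      have e5 : n + 1 - 1 = n := by omega
      have e6 : n - (s + 1) = n - s - 1 := by omega
      rw [e1, e2, e3, e5, e6]
      have hP : ((n + 1).choose (s + 1) : R) = (n.choose s : R) + (n.choose (s + 1) : R) := by
        rw [Nat.choose_succ_succ]; push_cast; ring
      rw [hP]
      have hB : (B : R) ^ (n - s) = B ^ (n - s - 1) * B := by
        rw [← pow_succ]; congr 1; omega
      have hD : (A - B) ^ (s + 1 + 1) = (A - B) ^ (s + 1) * (A - B) := by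
        rw [pow_succ]
      rw [hB, hD]
      ring

/-- Bergström's identity. -/
theorem bergstrom_identity {R : Type*} [CommRing R] (A B : R) (n s : ℕ)
    (hn : 1 ≤ n) (hs : s ≤ n) :
    A ^ n = ∑ m ∈ Finset.range (s + 1), (n.choose m : R) * B ^ (n - m) * (A - B) ^ m
      + ∑ m ∈ Finset.Icc (s + 1) n,
          ((m - 1).choose s : R) * A ^ (n - m) * (A - B) ^ (s + 1) * B ^ (m - s - 1) := by
  induction s with
  | zero =>
      have h := geom_sum₂_mul B A n
      rw [Finset.sum_range_one, ← Finset.Ico_add_one_right_eq_Icc, Finset.sum_Ico_eq_sum_range]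
      have hr : ∑ i ∈ Finset.range (n + 1 - (0 + 1)),
          (((0 + 1 + i) - 1).choose 0 : R) * A ^ (n - (0 + 1 + i)) * (A - B) ^ (0 + 1)
            * B ^ ((0 + 1 + i) - 0 - 1)
          = (∑ i ∈ Finset.range n, B ^ i * A ^ (n - 1 - i)) * (A - B) := by
        rw [Finset.sum_mul]
        refine Finset.sum_congr (by congr 1) fun i hi => ?_
        have e1 : n - (0 + 1 + i) = n - 1 - i := by omega
        have e2 : 0 + 1 + i - 1 = i := by omega
        have e3 : 0 + 1 + i - 0 - 1 = i := by omega
        rw [e1, e2, e3, Nat.choose_zero_right, pow_one]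
        push_cast; ring
      rw [hr]
      simp only [Nat.choose_zero_right, Nat.cast_one, one_mul, pow_zero, mul_one, Nat.sub_zero]
      linear_combination h
  | succ s ih =>
      rw [ih (by omega), berg_step A B s n hs]
      conv_rhs => rw [Finset.sum_range_succ]
      ring
end

section
/- Let X be a nonnegative integer-valued random variable with finite factorial moments ν_j = E[X(X-1)···(X-j+1)], and let s ∈ {1,2,3}. Then for all real t, E[e^{itX}] = 1 + Σ_{l=1}^{s} ν_l (e^{it}-1)^l / l! + θ ν_{s+1} |e^{it}-1|^{s+1} / s! for some complex θ with |θ| ≤ 1. -/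
open MeasureTheory
section charFunAux

lemma sum_choose_succ_rec (z : ℂ) (s n : ℕ) :
    ∑ k ∈ Finset.range (s+1), ((n+1).choose k : ℂ) * (z-1)^k
      = z * (∑ k ∈ Finset.range (s+1), (n.choose k : ℂ) * (z-1)^k)
        - (n.choose s : ℂ) * (z-1)^(s+1) := by
  have h1 : z * (∑ k ∈ Finset.range (s+1), (n.choose k : ℂ) * (z-1)^k)
      = ∑ k ∈ Finset.range (s+1), (n.choose k : ℂ) * (z-1)^k
        + ∑ k ∈ Finset.range (s+1), (n.choose k : ℂ) * (z-1)^(k+1) := by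
    rw [show z = 1 + (z-1) by ring, add_mul, one_mul, Finset.mul_sum]
    congr 1
    exact Finset.sum_congr rfl fun k _ => by ring
  rw [h1, Finset.sum_range_succ (f := fun k => (n.choose k : ℂ) * (z-1)^(k+1))]
  rw [Finset.sum_range_succ' (f := fun k => ((n+1).choose k : ℂ) * (z-1)^k)]
  rw [Finset.sum_range_succ' (f := fun k => (n.choose k : ℂ) * (z-1)^k)]
  simp only [Nat.choose_succ_succ, Nat.cast_add, Nat.choose_zero_right, Nat.cast_one, pow_zero,
    mul_one, add_mul]
  rw [Finset.sum_add_distrib]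
  ring

lemma norm_pow_sub_sum_choose (z : ℂ) (hz : ‖z‖ ≤ 1) (s : ℕ) : ∀ n : ℕ,
    ‖z ^ n - ∑ k ∈ Finset.range (s+1), (n.choose k : ℂ) * (z - 1) ^ k‖
      ≤ (n.choose (s+1) : ℝ) * ‖z - 1‖ ^ (s+1) := by
  intro n
  induction n with
  | zero =>
    have : ∑ k ∈ Finset.range (s+1), ((Nat.choose 0 k : ℕ) : ℂ) * (z - 1) ^ k = 1 := by
      rw [Finset.sum_eq_single 0]
      · simp
      · intro k _ hk
        rcases Nat.exists_eq_succ_of_ne_zero hk with ⟨m, rfl⟩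
        simp [Nat.choose_eq_zero_of_lt (Nat.succ_pos m)]
      · simp
    simp [this, Nat.choose_eq_zero_of_lt (Nat.succ_pos s)]
  | succ n ih =>
    have hid : z^(n+1) - ∑ k ∈ Finset.range (s+1), ((n+1).choose k : ℂ) * (z-1)^k
        = z * (z^n - ∑ k ∈ Finset.range (s+1), (n.choose k : ℂ) * (z-1)^k)
          + (n.choose s : ℂ) * (z-1)^(s+1) := by
      rw [sum_choose_succ_rec]; ring
    rw [hid]
    calc ‖z * (z^n - ∑ k ∈ Finset.range (s+1), (n.choose k : ℂ) * (z-1)^k)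
            + (n.choose s : ℂ) * (z-1)^(s+1)‖
        ≤ ‖z * (z^n - ∑ k ∈ Finset.range (s+1), (n.choose k : ℂ) * (z-1)^k)‖
            + ‖(n.choose s : ℂ) * (z-1)^(s+1)‖ := norm_add_le _ _
      _ ≤ ‖z^n - ∑ k ∈ Finset.range (s+1), (n.choose k : ℂ) * (z-1)^k‖
            + (n.choose s : ℝ) * ‖z-1‖^(s+1) := by
          rw [norm_mul, norm_mul, norm_pow]
          gcongr
          · exact mul_le_of_le_one_left (norm_nonneg _) hz
          · simp
      _ ≤ (n.choose (s+1) : ℝ) * ‖z-1‖^(s+1) + (n.choose s : ℝ) * ‖z-1‖^(s+1) := by gcongr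
      _ = ((n+1).choose (s+1) : ℝ) * ‖z-1‖^(s+1) := by
          rw [Nat.choose_succ_succ]; push_cast; ring

lemma exists_theta_aux (R : ℂ) (D : ℝ) (hD : 0 ≤ D) (h : ‖R‖ ≤ D) :
    ∃ θ : ℂ, ‖θ‖ ≤ 1 ∧ R = θ * (D : ℂ) := by
  rcases eq_or_lt_of_le hD with hD0 | hD0
  · refine ⟨0, by simp, ?_⟩
    have hR : R = 0 := norm_le_zero_iff.mp (by rw [← hD0] at h; exact h)
    simp [hR]
  · refine ⟨R / (D : ℂ), ?_, ?_⟩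
    · rw [norm_div, div_le_one (by simpa [Complex.norm_real, abs_of_pos hD0] using hD0)]
      simpa [Complex.norm_real, abs_of_pos hD0] using h
    · rw [div_mul_eq_mul_div, mul_div_assoc, div_self (by exact_mod_cast hD0.ne' : (D:ℂ) ≠ 0), mul_one]

end charFunAux

/-- Expansion of the characteristic function of a nonnegative integer random
variable in powers of (e^{it}−1), with factorial-moment coefficients. -/
theorem charFun_factorial_expansion {Ω : Type*} [MeasurableSpace Ω] (μ : Measure Ω)
    [IsProbabilityMeasure μ] (X : Ω → ℕ) (hX : Measurable X)
    (s : ℕ) (hs : s = 1 ∨ s = 2 ∨ s = 3)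
    (hint : ∀ l ≤ s + 1, Integrable (fun ω => ((X ω).descFactorial l : ℝ)) μ)
    (t : ℝ) :
    ∃ θ : ℂ, ‖θ‖ ≤ 1 ∧
      (∫ ω, Complex.exp (t * (X ω : ℂ) * Complex.I) ∂μ)
        = 1 + ∑ l ∈ Finset.Icc 1 s,
            ((∫ ω, ((X ω).descFactorial l : ℝ) ∂μ : ℝ) : ℂ)
              * (Complex.exp (t * Complex.I) - 1) ^ l / (l.factorial : ℂ)
          + θ * (((∫ ω, ((X ω).descFactorial (s + 1) : ℝ) ∂μ)
              * ‖Complex.exp (t * Complex.I) - 1‖ ^ (s + 1) / (s.factorial : ℝ) : ℝ) : ℂ) := by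
  set z : ℂ := Complex.exp (t * Complex.I) with hzdef
  have hz1 : ‖z‖ = 1 := Complex.norm_exp_ofReal_mul_I t
  have hzX : ∀ ω, Complex.exp (t * (X ω : ℂ) * Complex.I) = z ^ X ω := fun ω => by
    rw [hzdef, ← Complex.exp_nat_mul]
    ring_nf
  -- choose to descFactorial conversion on ℂ
  have hcd : ∀ (n k : ℕ), ((n.choose k : ℕ) : ℂ) = ((n.descFactorial k : ℝ) : ℂ) / (k.factorial : ℂ) := by
    intro n k
    rw [eq_div_iff (by exact_mod_cast k.factorial_ne_zero : (k.factorial : ℂ) ≠ 0)]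
    push_cast
    rw [← Nat.cast_mul, Nat.descFactorial_eq_factorial_mul_choose, Nat.mul_comm]
  -- integrability
  have hIntTerm : ∀ k ≤ s + 1, Integrable (fun ω => ((X ω).choose k : ℂ) * (z - 1) ^ k) μ := by
    intro k hk
    have : (fun ω => ((X ω).choose k : ℂ) * (z - 1) ^ k)
        = fun ω => (((X ω).descFactorial k : ℝ) : ℂ) * ((z - 1) ^ k / (k.factorial : ℂ)) := by
      funext ω; rw [hcd]; ring
    rw [this]
    exact ((hint k hk).ofReal.mul_const _)
  have hIntPow : Integrable (fun ω => z ^ X ω) μ := by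
    refine Integrable.mono' (integrable_const 1) ((measurable_from_nat.comp hX).aestronglyMeasurable) ?_
    filter_upwards with ω
    rw [norm_pow, hz1, one_pow]
  have hIntSum : Integrable (fun ω => ∑ k ∈ Finset.range (s+1), ((X ω).choose k : ℂ) * (z-1)^k) μ :=
    integrable_finset_sum _ fun k hk => hIntTerm k (by simp at hk; omega)
  have hIntg : Integrable (fun ω => z ^ X ω
      - ∑ k ∈ Finset.range (s+1), ((X ω).choose k : ℂ) * (z-1)^k) μ := hIntPow.sub hIntSum
  -- value of each term integral
  have hterm : ∀ k ≤ s + 1, ∫ ω, ((X ω).choose k : ℂ) * (z - 1) ^ k ∂μ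
      = ((∫ ω, ((X ω).descFactorial k : ℝ) ∂μ : ℝ) : ℂ) * ((z - 1) ^ k / (k.factorial : ℂ)) := by
    intro k hk
    have h1 : (fun ω => ((X ω).choose k : ℂ) * (z - 1) ^ k)
        = fun ω => (((X ω).descFactorial k : ℝ) : ℂ) * ((z - 1) ^ k / (k.factorial : ℂ)) := by
      funext ω; rw [hcd]; ring
    rw [h1, MeasureTheory.integral_mul_const]
    congr 1
    exact integral_ofReal
  -- main splitting of the integral
  have hEq : ∫ ω, z ^ X ω ∂μ
      = (∑ k ∈ Finset.range (s+1), ((∫ ω, ((X ω).descFactorial k : ℝ) ∂μ : ℝ) : ℂ)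
          * ((z - 1) ^ k / (k.factorial : ℂ)))
        + ∫ ω, (z ^ X ω - ∑ k ∈ Finset.range (s+1), ((X ω).choose k : ℂ) * (z-1)^k) ∂μ := by
    have h0 : (fun ω => z ^ X ω)
        = fun ω => (∑ k ∈ Finset.range (s+1), ((X ω).choose k : ℂ) * (z-1)^k)
          + (z ^ X ω - ∑ k ∈ Finset.range (s+1), ((X ω).choose k : ℂ) * (z-1)^k) := by
      funext ω; ring
    rw [h0, integral_add hIntSum hIntg, integral_finset_sum _ fun k hk =>
      hIntTerm k (by simp at hk; omega)]
    congr 1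
    exact Finset.sum_congr rfl fun k hk => hterm k (by simp at hk; omega)
  -- bound on the remainder
  set g : Ω → ℂ := fun ω => z ^ X ω - ∑ k ∈ Finset.range (s+1), ((X ω).choose k : ℂ) * (z-1)^k
    with hgdef
  have hgle : ∀ ω, ‖g ω‖ ≤ ((X ω).descFactorial (s+1) : ℝ) * (‖z-1‖^(s+1) / (s.factorial : ℝ)) := by
    intro ω
    refine (norm_pow_sub_sum_choose z hz1.le s (X ω)).trans ?_
    have hnat : (X ω).choose (s+1) * s.factorial ≤ (X ω).descFactorial (s+1) := by
      rw [Nat.descFactorial_eq_factorial_mul_choose, Nat.mul_comm]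
      exact Nat.mul_le_mul (Nat.factorial_le (Nat.le_succ s)) le_rfl
    have h2 : ((X ω).choose (s+1) : ℝ) ≤ ((X ω).descFactorial (s+1) : ℝ) / (s.factorial : ℝ) := by
      rw [le_div_iff₀ (by positivity)]
      exact_mod_cast hnat
    calc ((X ω).choose (s+1) : ℝ) * ‖z-1‖^(s+1)
        ≤ (((X ω).descFactorial (s+1) : ℝ) / (s.factorial : ℝ)) * ‖z-1‖^(s+1) := by
          gcongr
      _ = ((X ω).descFactorial (s+1) : ℝ) * (‖z-1‖^(s+1) / (s.factorial : ℝ)) := by ring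
  have hRle : ‖∫ ω, g ω ∂μ‖
      ≤ (∫ ω, ((X ω).descFactorial (s+1) : ℝ) ∂μ) * ‖z-1‖^(s+1) / (s.factorial : ℝ) := by
    have := norm_integral_le_of_norm_le ((hint (s+1) le_rfl).mul_const
      (‖z-1‖^(s+1) / (s.factorial : ℝ))) (Filter.Eventually.of_forall hgle)
    rwa [MeasureTheory.integral_mul_const, ← mul_div_assoc] at this
  have hν : 0 ≤ ∫ ω, ((X ω).descFactorial (s+1) : ℝ) ∂μ :=
    integral_nonneg fun ω => by positivity
  have hD0 : 0 ≤ (∫ ω, ((X ω).descFactorial (s+1) : ℝ) ∂μ) * ‖z-1‖^(s+1) / (s.factorial : ℝ) := by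
    positivity
  obtain ⟨θ, hθ, hθeq⟩ := exists_theta_aux (∫ ω, g ω ∂μ) _ hD0 hRle
  refine ⟨θ, hθ, ?_⟩
  have hint_eq : ∫ ω, Complex.exp (t * (X ω : ℂ) * Complex.I) ∂μ = ∫ ω, z ^ X ω ∂μ := by
    congr 1; funext ω; exact hzX ω
  rw [hint_eq, hEq, hθeq]
  congr 1
  -- split off the k = 0 term
  rw [Finset.sum_range_succ' (f := fun k => ((∫ ω, ((X ω).descFactorial k : ℝ) ∂μ : ℝ) : ℂ)
    * ((z - 1) ^ k / (k.factorial : ℂ)))]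
  rw [add_comm]
  congr 1
  · simp
  · rw [show Finset.Icc 1 s = Finset.Ico 1 (s+1) by rw [Finset.Ico_add_one_right_eq_Icc],
      Finset.sum_Ico_eq_sum_range]
    simp only [Nat.add_sub_cancel]
    exact Finset.sum_congr rfl fun k _ => by rw [add_comm 1 k]; ring
end

section
/- Let λ > 0 and k be a nonnegative integer. Then ∫_{-π}^{π} |sin(t/2)|^k e^{-λ sin²(t/2)} dt ≤ C(k) / max(1, λ^{(k+1)/2}) for a constant C(k) depending only on k. -/
open Real

/-- `y^k * exp(-y^2) ≤ 2 * k!` for `y ≥ 0`. -/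
lemma aux_pow_exp_bound (k : ℕ) {y : ℝ} (hy : 0 ≤ y) :
    y ^ k * Real.exp (-y ^ 2) ≤ 2 * (k.factorial : ℝ) := by
  have h1 : y ^ k ≤ (k.factorial : ℝ) * Real.exp y := by
    have := Real.pow_div_factorial_le_exp y hy k
    have hf : (0:ℝ) < k.factorial := by exact_mod_cast k.factorial_pos
    rw [div_le_iff₀ hf] at this
    linarith [this]
  have h2 : Real.exp y * Real.exp (-y ^ 2) = Real.exp (y - y ^ 2) := by
    rw [← Real.exp_add]; ring_nf
  have h3 : Real.exp (y - y ^ 2) ≤ Real.exp (1/4 : ℝ) :=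
    Real.exp_le_exp.2 (by nlinarith [sq_nonneg (y - 1/2)])
  have h4 : Real.exp (1/4 : ℝ) ≤ 2 := by
    nlinarith [Real.exp_one_lt_d9, Real.add_one_le_exp (1/4 : ℝ),
      Real.exp_pos (1/4 : ℝ), sq_nonneg (Real.exp (1/4:ℝ) - 2),
      (by rw [← Real.exp_nat_mul]; norm_num : Real.exp (1/4 : ℝ) ^ (4:ℕ) = Real.exp 1)]
  have hexp : (0:ℝ) ≤ Real.exp (-y ^ 2) := (Real.exp_pos _).le
  calc y ^ k * Real.exp (-y ^ 2)
      ≤ ((k.factorial : ℝ) * Real.exp y) * Real.exp (-y ^ 2) := by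
        apply mul_le_mul_of_nonneg_right h1 hexp
    _ = (k.factorial : ℝ) * (Real.exp y * Real.exp (-y ^ 2)) := by ring
    _ = (k.factorial : ℝ) * Real.exp (y - y ^ 2) := by rw [h2]
    _ ≤ (k.factorial : ℝ) * 2 := by
        apply mul_le_mul_of_nonneg_left (h3.trans h4)
        exact_mod_cast k.factorial_pos.le
    _ = 2 * (k.factorial : ℝ) := by ring

/-- Pointwise bound. -/
lemma aux_pointwise (k : ℕ) {l : ℝ} (hl : 0 < l) {t : ℝ} (ht : |t| ≤ π) :
    |Real.sin (t / 2)| ^ k * Real.exp (-l * Real.sin (t / 2) ^ 2)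
      ≤ (2 * (k.factorial : ℝ) * (l / 2) ^ (-(k : ℝ) / 2))
        * Real.exp (-(l / (2 * π ^ 2)) * t ^ 2) := by
  have hpi := Real.pi_pos
  set s := |Real.sin (t / 2)| with hs
  have hs0 : 0 ≤ s := abs_nonneg _
  -- s ≥ |t|/π
  have hst : |t| / π ≤ s := by
    rcases le_total 0 t with h | h
    · rw [abs_of_nonneg h]
      have := Real.mul_le_sin (x := t / 2) (by linarith) (by rw [abs_of_nonneg h] at ht; linarith)
      calc t / π = 2 / π * (t / 2) := by field_simp
        _ ≤ Real.sin (t / 2) := this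
        _ ≤ s := le_abs_self _
    · rw [abs_of_nonpos h]
      have h2 : 0 ≤ -t := by linarith
      have := Real.mul_le_sin (x := -t / 2) (by linarith)
        (by rw [abs_of_nonpos h] at ht; linarith)
      calc -t / π = 2 / π * (-t / 2) := by field_simp
        _ ≤ Real.sin (-t / 2) := this
        _ = -Real.sin (t / 2) := by rw [← Real.sin_neg]; ring_nf
        _ ≤ s := neg_le_abs _
  have hsq : t ^ 2 / π ^ 2 ≤ s ^ 2 := by
    have := pow_le_pow_left₀ (by positivity) hst 2
    calc t ^ 2 / π ^ 2 = (|t| / π) ^ 2 := by rw [div_pow, sq_abs]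
      _ ≤ s ^ 2 := this
  have hl2 : (0:ℝ) < l / 2 := by linarith
  -- split the exponential
  have hsplit : Real.exp (-l * s ^ 2)
      = Real.exp (-(l / 2) * s ^ 2) * Real.exp (-(l / 2) * s ^ 2) := by
    rw [← Real.exp_add]; ring_nf
  have hsin2 : Real.sin (t / 2) ^ 2 = s ^ 2 := (sq_abs _).symm
  rw [hsin2, hsplit]
  have key1 : s ^ k * Real.exp (-(l / 2) * s ^ 2)
      ≤ 2 * (k.factorial : ℝ) * (l / 2) ^ (-(k : ℝ) / 2) := by
    set y := Real.sqrt (l / 2) * s with hy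
    have hy0 : 0 ≤ y := by positivity
    have hysq : y ^ 2 = (l / 2) * s ^ 2 := by
      rw [hy, mul_pow, Real.sq_sqrt hl2.le]
    have hsy : s ^ k = y ^ k * (l / 2) ^ (-(k : ℝ) / 2) := by
      have h1 : Real.sqrt (l / 2) ^ k = (l / 2) ^ ((k : ℝ) / 2) := by
        rw [Real.sqrt_eq_rpow, ← Real.rpow_natCast ((l/2) ^ ((1:ℝ)/2)) k,
          ← Real.rpow_mul hl2.le]
        ring_nf
      have h2 : (l / 2) ^ ((k : ℝ) / 2) * (l / 2) ^ (-(k : ℝ) / 2) = 1 := by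
        rw [← Real.rpow_add hl2]
        have h0 : (k : ℝ) / 2 + -(k : ℝ) / 2 = 0 := by ring
        rw [h0, Real.rpow_zero]
      calc s ^ k = ((l / 2) ^ ((k : ℝ) / 2) * (l / 2) ^ (-(k : ℝ) / 2)) * s ^ k := by
            rw [h2]; ring
        _ = y ^ k * (l / 2) ^ (-(k : ℝ) / 2) := by rw [hy, mul_pow, h1]; ring
    calc s ^ k * Real.exp (-(l / 2) * s ^ 2)
        = (y ^ k * Real.exp (-y ^ 2)) * (l / 2) ^ (-(k : ℝ) / 2) := by
          rw [hsy, hysq]; ring_nf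
      _ ≤ (2 * (k.factorial : ℝ)) * (l / 2) ^ (-(k : ℝ) / 2) := by
          apply mul_le_mul_of_nonneg_right (aux_pow_exp_bound k hy0)
          positivity
  have key2 : Real.exp (-(l / 2) * s ^ 2) ≤ Real.exp (-(l / (2 * π ^ 2)) * t ^ 2) := by
    apply Real.exp_le_exp.2
    have : l / (2 * π ^ 2) * t ^ 2 ≤ l / 2 * s ^ 2 := by
      have := mul_le_mul_of_nonneg_left hsq hl2.le
      calc l / (2 * π ^ 2) * t ^ 2 = l / 2 * (t ^ 2 / π ^ 2) := by
            field_simp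
        _ ≤ l / 2 * s ^ 2 := this
    linarith
  calc s ^ k * (Real.exp (-(l / 2) * s ^ 2) * Real.exp (-(l / 2) * s ^ 2))
      = (s ^ k * Real.exp (-(l / 2) * s ^ 2)) * Real.exp (-(l / 2) * s ^ 2) := by ring
    _ ≤ (2 * (k.factorial : ℝ) * (l / 2) ^ (-(k : ℝ) / 2)) * Real.exp (-(l / 2) * s ^ 2) := by
        apply mul_le_mul_of_nonneg_right key1 (Real.exp_pos _).le
    _ ≤ (2 * (k.factorial : ℝ) * (l / 2) ^ (-(k : ℝ) / 2))
          * Real.exp (-(l / (2 * π ^ 2)) * t ^ 2) := by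
        apply mul_le_mul_of_nonneg_left key2; positivity

/-- Integral smoothing bound: ∫_{-π}^{π} |sin(t/2)|^k e^{-λ sin²(t/2)} dt ≤ C(k)/max(1, λ^{(k+1)/2}). -/
theorem sin_pow_exp_integral_bound (k : ℕ) :
    ∃ C : ℝ, 0 < C ∧ ∀ l : ℝ, 0 < l →
      (∫ t in (-π)..π, |Real.sin (t / 2)| ^ k * Real.exp (-l * Real.sin (t / 2) ^ 2))
        ≤ C / max 1 (l ^ (((k : ℝ) + 1) / 2)) := by
  have hpi := Real.pi_pos
  set D : ℝ := 2 * (k.factorial : ℝ) * (2:ℝ) ^ ((k : ℝ) / 2) * Real.sqrt (2 * π ^ 3) with hD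
  have hDpos : 0 < D := by positivity
  -- key decay bound, valid for all l > 0
  have key : ∀ l : ℝ, 0 < l →
      (∫ t in (-π)..π, |Real.sin (t / 2)| ^ k * Real.exp (-l * Real.sin (t / 2) ^ 2))
        ≤ D / l ^ (((k : ℝ) + 1) / 2) := by
    intro l hl
    set a : ℝ := l / (2 * π ^ 2) with ha
    have hapos : 0 < a := by positivity
    set M : ℝ := 2 * (k.factorial : ℝ) * (l / 2) ^ (-(k : ℝ) / 2) with hM
    have hMpos : 0 < M := by positivity
    have hcont : Continuous fun t : ℝ =>
        |Real.sin (t / 2)| ^ k * Real.exp (-l * Real.sin (t / 2) ^ 2) := by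
      fun_prop
    have hcont2 : Continuous fun t : ℝ => M * Real.exp (-a * t ^ 2) := by fun_prop
    have step1 : (∫ t in (-π)..π, |Real.sin (t / 2)| ^ k * Real.exp (-l * Real.sin (t / 2) ^ 2))
        ≤ ∫ t in (-π)..π, M * Real.exp (-a * t ^ 2) := by
      apply intervalIntegral.integral_mono_on (by linarith)
        (hcont.intervalIntegrable _ _) (hcont2.intervalIntegrable _ _)
      intro t ht
      rw [Set.mem_Icc] at ht
      exact aux_pointwise k hl (abs_le.2 ⟨ht.1, ht.2⟩)
    have step2 : (∫ t in (-π)..π, M * Real.exp (-a * t ^ 2))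
        ≤ M * Real.sqrt (π / a) := by
      rw [intervalIntegral.integral_const_mul]
      have hle : (∫ t in (-π)..π, Real.exp (-a * t ^ 2)) ≤ Real.sqrt (π / a) := by
        rw [intervalIntegral.integral_of_le (by linarith)]
        rw [← integral_gaussian a]
        apply MeasureTheory.setIntegral_le_integral (integrable_exp_neg_mul_sq hapos)
        filter_upwards with x using (Real.exp_pos _).le
      exact mul_le_mul_of_nonneg_left hle hMpos.le
    -- arithmetic: M * sqrt(π/a) = D / l^((k+1)/2)
    have arith : M * Real.sqrt (π / a) = D / l ^ (((k : ℝ) + 1) / 2) := by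
      have h1 : π / a = (2 * π ^ 3) / l := by rw [ha]; field_simp
      have h2 : Real.sqrt ((2 * π ^ 3) / l)
          = Real.sqrt (2 * π ^ 3) * l ^ (-(1:ℝ) / 2) := by
        rw [Real.sqrt_div (by positivity : (0:ℝ) ≤ 2 * π ^ 3) l,
          Real.sqrt_eq_rpow l, div_eq_mul_inv, ← Real.rpow_neg hl.le]
        norm_num
      have h3 : (l / 2) ^ (-(k : ℝ) / 2)
          = (2:ℝ) ^ ((k : ℝ) / 2) * l ^ (-(k : ℝ) / 2) := by
        rw [Real.div_rpow hl.le (by norm_num : (0:ℝ) ≤ 2), div_eq_mul_inv,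
          ← Real.rpow_neg (by norm_num : (0:ℝ) ≤ 2), neg_div, neg_neg]
        ring
      have h4 : l ^ (-(k : ℝ) / 2) * l ^ (-(1:ℝ) / 2) = l ^ (-(((k : ℝ) + 1) / 2)) := by
        rw [← Real.rpow_add hl]
        congr 1
        ring
      rw [hM, h1, h2, h3]
      calc 2 * (k.factorial:ℝ) * ((2:ℝ) ^ ((k:ℝ)/2) * l ^ (-(k:ℝ)/2))
            * (Real.sqrt (2 * π ^ 3) * l ^ (-(1:ℝ)/2))
          = D * (l ^ (-(k:ℝ)/2) * l ^ (-(1:ℝ)/2)) := by rw [hD]; ring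
        _ = D * l ^ (-(((k:ℝ)+1)/2)) := by rw [h4]
        _ = D * (l ^ (((k:ℝ)+1)/2))⁻¹ := by rw [Real.rpow_neg hl.le]
        _ = D / l ^ (((k:ℝ)+1)/2) := (div_eq_mul_inv _ _).symm
    calc (∫ t in (-π)..π, |Real.sin (t / 2)| ^ k * Real.exp (-l * Real.sin (t / 2) ^ 2))
        ≤ ∫ t in (-π)..π, M * Real.exp (-a * t ^ 2) := step1
      _ ≤ M * Real.sqrt (π / a) := step2
      _ = D / l ^ (((k : ℝ) + 1) / 2) := arith
  -- trivial bound: integral ≤ 2π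
  have triv : ∀ l : ℝ, 0 < l →
      (∫ t in (-π)..π, |Real.sin (t / 2)| ^ k * Real.exp (-l * Real.sin (t / 2) ^ 2))
        ≤ 2 * π := by
    intro l hl
    have hcont : Continuous fun t : ℝ =>
        |Real.sin (t / 2)| ^ k * Real.exp (-l * Real.sin (t / 2) ^ 2) := by fun_prop
    have : (∫ t in (-π)..π, |Real.sin (t / 2)| ^ k * Real.exp (-l * Real.sin (t / 2) ^ 2))
        ≤ ∫ _ in (-π)..π, (1:ℝ) := by
      apply intervalIntegral.integral_mono_on (by linarith)
        (hcont.intervalIntegrable _ _) (by simp [intervalIntegrable_const])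
      intro t _
      have h1 : |Real.sin (t / 2)| ^ k ≤ 1 :=
        pow_le_one₀ (abs_nonneg _) (Real.abs_sin_le_one _)
      have h2 : Real.exp (-l * Real.sin (t / 2) ^ 2) ≤ 1 := by
        rw [Real.exp_le_one_iff]; nlinarith [sq_nonneg (Real.sin (t/2))]
      calc |Real.sin (t / 2)| ^ k * Real.exp (-l * Real.sin (t / 2) ^ 2)
          ≤ 1 * 1 := mul_le_mul h1 h2 (Real.exp_pos _).le one_pos.le
        _ = 1 := by ring
    have h1 : (∫ _ in (-π)..π, (1:ℝ)) = 2 * π := by simp; ring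
    linarith [this, h1.le, h1.ge]
  refine ⟨max (2 * π) D, lt_max_of_lt_left (by linarith), fun l hl => ?_⟩
  rcases le_total l 1 with h1 | h1
  · have hmax : max 1 (l ^ (((k : ℝ) + 1) / 2)) = 1 := by
      rw [max_eq_left]
      exact Real.rpow_le_one hl.le h1 (by positivity)
    rw [hmax, div_one]
    exact (triv l hl).trans (le_max_left _ _)
  · have hrp : (1:ℝ) ≤ l ^ (((k : ℝ) + 1) / 2) :=
      Real.one_le_rpow h1 (by positivity)
    have hmax : max 1 (l ^ (((k : ℝ) + 1) / 2)) = l ^ (((k : ℝ) + 1) / 2) :=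
      max_eq_right hrp
    rw [hmax]
    refine (key l hl).trans ?_
    have hlp : 0 < l ^ (((k : ℝ) + 1) / 2) := by positivity
    gcongr
    exact le_max_right _ _
end

section
/- Let M be a finite signed measure on ℤ with Σ_k |k||M{k}| < ∞ and Fourier transform M̂. Then for every real v and every u > 0, the total variation norm satisfies ‖M‖ = Σ_k |M{k}| ≤ (1 + uπ)^{1/2} · ( (1/2π) ∫_{-π}^{π} [ |M̂(t)|² + u^{-2} |(e^{-itv} M̂(t))'|² ] dt )^{1/2}. -/
open Real MeasureTheory

/-- The Fourier transform of a (signed) measure `M` on ℤ, identified with its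
sequence of point masses. -/
noncomputable def fourierZ (M : ℤ → ℝ) (t : ℝ) : ℂ :=
  ∑' k : ℤ, (M k : ℂ) * Complex.exp (t * k * Complex.I)


variable {u v : ℝ}

lemma integ_f (u v : ℝ) (hu : 0 < u) : Integrable (fun x : ℝ => (1 + (x - v)^2 / u^2)⁻¹) := by
  have h0 : (fun x : ℝ => (1 + (x - v)^2/u^2)⁻¹)
      = fun x : ℝ => (1 + ((x + -v)/u)^2)⁻¹ := by
    funext x; rw [div_pow, sub_eq_add_neg]
  rw [h0]
  exact ((integrable_inv_one_add_sq.comp_div hu.ne').comp_add_right (-v))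

lemma integral_f (u v : ℝ) (hu : 0 < u) : (∫ x : ℝ, (1 + (x - v)^2 / u^2)⁻¹) = u * π := by
  have h0 : (fun x : ℝ => (1 + (x - v)^2/u^2)⁻¹)
      = fun x : ℝ => (1 + ((x + -v)/u)^2)⁻¹ := by
    funext x; rw [div_pow, sub_eq_add_neg]
  rw [h0, integral_add_right_eq_self (fun x : ℝ => (1 + (x/u)^2)⁻¹) (-v),
    Measure.integral_comp_div (fun x : ℝ => (1 + x^2)⁻¹) u, integral_univ_inv_one_add_sq,
    smul_eq_mul, abs_of_pos hu]

lemma f_pos (hu : 0 < u) (x : ℝ) : 0 < (1 + (x - v)^2 / u^2)⁻¹ := by positivity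

lemma f_le_one (hu : 0 < u) (x : ℝ) : (1 + (x - v)^2 / u^2)⁻¹ ≤ 1 := by
  apply inv_le_one_of_one_le₀; nlinarith [div_nonneg (sq_nonneg (x - v)) (sq_nonneg u)]

lemma f_comp (hu : 0 < u) {x y : ℝ} (h : |x - v| ≤ |y - v|) :
    (1 + (y - v)^2 / u^2)⁻¹ ≤ (1 + (x - v)^2 / u^2)⁻¹ := by
  have h2 : (x - v)^2 ≤ (y - v)^2 := by
    rw [← sq_abs (x - v), ← sq_abs (y - v)]
    exact pow_le_pow_left₀ (abs_nonneg _) h 2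
  have hu2 : (0:ℝ) < u^2 := by positivity
  apply inv_anti₀ (by positivity)
  gcongr

lemma finsum_bound (u v : ℝ) (hu : 0 < u) (S : Finset ℤ) :
    ∑ k ∈ S, (1 + ((k:ℝ) - v)^2 / u^2)⁻¹ ≤ 1 + u * π := by
  set f : ℝ → ℝ := fun x => (1 + (x - v)^2 / u^2)⁻¹ with hf
  have hfi : Integrable f := integ_f u v hu
  have hfpos : ∀ x, 0 < f x := f_pos hu
  set m : ℤ := ⌊v⌋ with hmdef
  have hm : (m:ℝ) ≤ v := Int.floor_le v
  have hm1 : v < (m:ℝ) + 1 := Int.lt_floor_add_one v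
  set n : ℕ := S.sup fun k => k.natAbs + m.natAbs with hndef
  have hn : ∀ k ∈ S, k.natAbs + m.natAbs ≤ n := fun k hk => Finset.le_sup (f := fun k : ℤ => k.natAbs + m.natAbs) hk
  -- split the sum
  set A : Finset ℤ := S.filter (· ≤ m - 1) with hA
  set B : Finset ℤ := (S.filter (¬ · ≤ m - 1)).filter (· ≤ m + 1) with hB
  set C : Finset ℤ := (S.filter (¬ · ≤ m - 1)).filter (¬ · ≤ m + 1) with hC
  have hsplit : ∑ k ∈ S, f k = (∑ k ∈ A, f k) + ((∑ k ∈ B, f k) + ∑ k ∈ C, f k) := by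
    have h1 := Finset.sum_filter_add_sum_filter_not S (· ≤ m - 1) (fun k => f k)
    have h2 := Finset.sum_filter_add_sum_filter_not (S.filter (¬ · ≤ m - 1)) (· ≤ m + 1)
      (fun k => f k)
    rw [← hA] at h1; rw [← hB, ← hC] at h2
    linarith
  -- bound B sum by values at m and m+1
  have hBsub : B ⊆ {m, m + 1} := by
    intro k hk
    simp only [hB, Finset.mem_filter, decide_eq_true_eq, not_le] at hk
    simp only [Finset.mem_insert, Finset.mem_singleton]
    omega
  have hBbound : ∑ k ∈ B, f k ≤ f m + f (m + 1) := by
    have : ∑ k ∈ ({m, m+1} : Finset ℤ), f k = f m + f (m+1) := by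
      rw [Finset.sum_pair (by omega)]; push_cast; ring_nf
    calc ∑ k ∈ B, f k ≤ ∑ k ∈ ({m, m+1} : Finset ℤ), f k :=
          Finset.sum_le_sum_of_subset_of_nonneg hBsub (fun i _ _ => (hfpos _).le)
      _ = f m + f (m+1) := this
  -- middle bound
  have hBint : f m + f (m + 1) ≤ 1 + ∫ x in (m:ℝ)..((m:ℝ)+1), f x := by
    rcases le_or_gt (v - m) (1/2) with h | h
    · have h1 : f m ≤ 1 := f_le_one hu _
      have h2 : f ((m:ℝ)+1) ≤ ∫ x in (m:ℝ)..((m:ℝ)+1), f x := by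
        calc f ((m:ℝ)+1) = ∫ _x in (m:ℝ)..((m:ℝ)+1), f ((m:ℝ)+1) := by simp
          _ ≤ ∫ x in (m:ℝ)..((m:ℝ)+1), f x := by
              apply intervalIntegral.integral_mono_on (by linarith)
                intervalIntegrable_const hfi.intervalIntegrable
              intro x hx
              apply f_comp hu
              rw [abs_of_nonneg (by linarith : (0:ℝ) ≤ (m:ℝ) + 1 - v)]
              exact abs_le.mpr ⟨by linarith [hx.1], by linarith [hx.2]⟩
      linarith
    · have h1 : f ((m:ℝ)+1) ≤ 1 := f_le_one hu _
      have h2 : f (m:ℝ) ≤ ∫ x in (m:ℝ)..((m:ℝ)+1), f x := by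
        calc f (m:ℝ) = ∫ _x in (m:ℝ)..((m:ℝ)+1), f (m:ℝ) := by simp
          _ ≤ ∫ x in (m:ℝ)..((m:ℝ)+1), f x := by
              apply intervalIntegral.integral_mono_on (by linarith)
                intervalIntegrable_const hfi.intervalIntegrable
              intro x hx
              apply f_comp hu
              rw [abs_sub_comm (m:ℝ) v, abs_of_nonneg (by linarith : (0:ℝ) ≤ v - m)]
              exact abs_le.mpr ⟨by linarith [hx.1], by linarith [hx.2]⟩
      linarith
  -- right tail
  have hCbound : ∑ k ∈ C, f k ≤ ∫ x in ((m:ℝ)+1)..((m:ℝ)+1+n), f x := by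
    have hanti : AntitoneOn f (Set.Icc ((m:ℝ)+1) ((m:ℝ)+1+n)) := by
      intro x hx y hy hxy
      apply f_comp hu
      rw [abs_of_nonneg (by linarith [hx.1] : (0:ℝ) ≤ x - v),
        abs_of_nonneg (by linarith [hy.1] : (0:ℝ) ≤ y - v)]
      linarith
    have key := hanti.sum_le_integral
    refine le_trans ?_ key
    have hCmem : ∀ k ∈ C, m + 2 ≤ k ∧ (k - (m+2)).toNat < n := by
      intro k hk
      simp only [hC, Finset.mem_filter, decide_eq_true_eq, not_le] at hk
      have := hn k hk.1.1
      omega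
    calc ∑ k ∈ C, f ↑k
        = ∑ i ∈ C.image (fun k : ℤ => (k - (m+2)).toNat),
            f ((m:ℝ)+1 + ((i:ℕ)+1 : ℕ)) := by
          rw [Finset.sum_image]
          · apply Finset.sum_congr rfl
            intro k hk
            have hk2 := (hCmem k hk).1
            have h3 : (((k - (m+2)).toNat : ℤ) : ℝ) = ((k - (m+2) : ℤ) : ℝ) := by
              rw [Int.toNat_of_nonneg (by omega)]
            push_cast at h3 ⊢
            congr 1
            rw [h3]; ring
          · intro a ha b hb hab
            have ha' := (hCmem a ha).1
            have hb' := (hCmem b hb).1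
            simp only at hab
            omega
      _ ≤ ∑ i ∈ Finset.range n, f ((m:ℝ)+1 + ((i:ℕ)+1 : ℕ)) := by
          apply Finset.sum_le_sum_of_subset_of_nonneg
          · intro i hi
            simp only [Finset.mem_image] at hi
            obtain ⟨k, hk, rfl⟩ := hi
            exact Finset.mem_range.mpr (hCmem k hk).2
          · intro i _ _; exact (hfpos _).le
  -- left tail
  have hAbound : ∑ k ∈ A, f k ≤ ∫ x in ((m:ℝ)-n)..((m:ℝ)-n+n), f x := by
    have hmono : MonotoneOn f (Set.Icc ((m:ℝ)-n) ((m:ℝ)-n+n)) := by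
      intro x hx y hy hxy
      apply f_comp hu
      rw [abs_sub_comm x v, abs_sub_comm y v,
        abs_of_nonneg (by linarith [hy.2] : (0:ℝ) ≤ v - y),
        abs_of_nonneg (by linarith [hx.2] : (0:ℝ) ≤ v - x)]
      linarith
    have key := hmono.sum_le_integral
    refine le_trans ?_ key
    have hAmem : ∀ k ∈ A, m - n ≤ k ∧ (k - (m - n)).toNat < n := by
      intro k hk
      simp only [hA, Finset.mem_filter, decide_eq_true_eq] at hk
      have := hn k hk.1
      omega
    calc ∑ k ∈ A, f ↑k
        = ∑ i ∈ A.image (fun k : ℤ => (k - (m - n)).toNat),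
            f ((m:ℝ)-n + (i:ℕ)) := by
          rw [Finset.sum_image]
          · apply Finset.sum_congr rfl
            intro k hk
            have hk2 := (hAmem k hk).1
            have h3 : (((k - (m - n)).toNat : ℤ) : ℝ) = ((k - (m - n) : ℤ) : ℝ) := by
              rw [Int.toNat_of_nonneg (by omega)]
            push_cast at h3 ⊢
            congr 1
            rw [h3]; ring
          · intro a ha b hb hab
            have ha' := (hAmem a ha).1
            have hb' := (hAmem b hb).1
            simp only at hab
            omega
      _ ≤ ∑ i ∈ Finset.range n, f ((m:ℝ)-n + (i:ℕ)) := by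
          apply Finset.sum_le_sum_of_subset_of_nonneg
          · intro i hi
            simp only [Finset.mem_image] at hi
            obtain ⟨k, hk, rfl⟩ := hi
            exact Finset.mem_range.mpr (hAmem k hk).2
          · intro i _ _; exact (hfpos _).le
  -- combine integrals
  have hii : ∀ a b : ℝ, IntervalIntegrable f volume a b := fun a b => hfi.intervalIntegrable
  have hadd1 : (∫ x in ((m:ℝ)-n)..((m:ℝ)-n+n), f x) + (∫ x in (m:ℝ)..((m:ℝ)+1), f x)
      = ∫ x in ((m:ℝ)-n)..((m:ℝ)+1), f x := by
    rw [show (m:ℝ)-n+n = (m:ℝ) by ring]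
    exact intervalIntegral.integral_add_adjacent_intervals (hii _ _) (hii _ _)
  have hadd2 : (∫ x in ((m:ℝ)-n)..((m:ℝ)+1), f x) + (∫ x in ((m:ℝ)+1)..((m:ℝ)+1+n), f x)
      = ∫ x in ((m:ℝ)-n)..((m:ℝ)+1+n), f x :=
    intervalIntegral.integral_add_adjacent_intervals (hii _ _) (hii _ _)
  have hle : (∫ x in ((m:ℝ)-n)..((m:ℝ)+1+n), f x) ≤ ∫ x, f x := by
    rw [intervalIntegral.integral_of_le (by push_cast; linarith [Nat.cast_nonneg (α := ℝ) n])]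
    exact setIntegral_le_integral hfi (Filter.Eventually.of_forall fun x => (hfpos x).le)
  have hval : (∫ x, f x) = u * π := integral_f u v hu
  rw [hsplit]
  linarith


lemma norm_exp_I (t c : ℝ) : ‖Complex.exp ((t:ℂ) * (c:ℂ) * Complex.I)‖ = 1 := by
  rw [show ((t:ℂ) * c * Complex.I) = ((t*c : ℝ):ℂ) * Complex.I by push_cast; ring,
    Complex.norm_exp_ofReal_mul_I]

lemma integral_exp_int (n : ℤ) :
    (∫ t : ℝ in (-π)..π, Complex.exp (t * n * Complex.I)) = if n = 0 then (2*π:ℂ) else 0 := by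
  rcases eq_or_ne n 0 with rfl | hn
  · simp only [Int.cast_zero, mul_zero, zero_mul, Complex.exp_zero, if_pos rfl]
    rw [intervalIntegral.integral_const, sub_neg_eq_add, Complex.real_smul]
    push_cast; ring
  · rw [if_neg hn]
    have hc : ((n:ℂ) * Complex.I) ≠ 0 :=
      mul_ne_zero (by exact_mod_cast hn) Complex.I_ne_zero
    have h : ∀ t:ℝ, ((t:ℂ) * n * Complex.I) = ((n:ℂ)*Complex.I) * t := fun t => by ring
    simp_rw [h]
    rw [integral_exp_mul_complex hc]
    have h1 : Complex.exp ((n:ℂ)*Complex.I*(π:ℝ)) = (-1:ℂ)^n := by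
      rw [show ((n:ℂ)*Complex.I*(π:ℝ)) = (n:ℂ) * ((π:ℂ)*Complex.I) by push_cast; ring,
        Complex.exp_int_mul, Complex.exp_pi_mul_I]
    have h2 : Complex.exp ((n:ℂ)*Complex.I*((-π:ℝ):ℂ)) = ((-1:ℂ)^n)⁻¹ := by
      rw [show ((n:ℂ)*Complex.I*((-π:ℝ):ℂ)) = (-n:ℤ) * ((π:ℂ)*Complex.I) by push_cast; ring,
        Complex.exp_int_mul, Complex.exp_pi_mul_I, zpow_neg]
    have h3 : ((-1:ℂ)^n)⁻¹ = (-1:ℂ)^n := by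
      rw [← inv_zpow, inv_neg, inv_one]
    rw [h1, h2, h3, sub_self, zero_div]

lemma summable_sq {a : ℤ → ℂ} (ha : Summable fun k => ‖a k‖) :
    Summable fun k => ‖a k‖^2 := by
  apply Summable.of_norm_bounded_eventually ha
  have h1 : ∀ᶠ k in Filter.cofinite, ‖a k‖ < 1 :=
    ha.tendsto_cofinite_zero.eventually (gt_mem_nhds one_pos)
  filter_upwards [h1] with k hk
  rw [Real.norm_eq_abs, abs_of_nonneg (by positivity)]
  nlinarith [norm_nonneg (a k)]

lemma norm_exp_neg_I (t : ℝ) (k : ℤ) : ‖Complex.exp (-((t:ℂ) * k * Complex.I))‖ = 1 := by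
  rw [show -((t:ℂ) * k * Complex.I) = ((-t:ℝ):ℂ) * ((k:ℝ):ℂ) * Complex.I by push_cast; ring]
  exact norm_exp_I (-t) (k:ℝ)

lemma parseval (a : ℤ → ℂ) (ha : Summable fun k => ‖a k‖) :
    (∫ t in (-π)..π, ‖∑' k : ℤ, a k * Complex.exp ((t:ℂ) * k * Complex.I)‖ ^ 2)
      = 2 * π * ∑' k : ℤ, ‖a k‖ ^ 2 := by
  have hπ : (-π : ℝ) ≤ π := by linarith [pi_pos]
  set e : ℝ → ℤ → ℂ := fun t k => Complex.exp ((t:ℂ) * k * Complex.I) with he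
  have hne : ∀ t k, ‖e t k‖ = 1 := fun t k => by
    simpa using norm_exp_I t (k:ℝ)
  have hnae : ∀ t k, ‖a k * e t k‖ = ‖a k‖ := fun t k => by
    rw [norm_mul, hne, mul_one]
  -- pointwise product expansion
  set F : ℤ × ℤ → ℝ → ℂ := fun p t =>
    a p.1 * (starRingEnd ℂ) (a p.2) * Complex.exp ((t:ℂ) * ((p.1:ℂ) - p.2) * Complex.I) with hF
  have hpoint : ∀ t : ℝ, ((‖∑' k, a k * e t k‖^2 : ℝ) : ℂ) = ∑' p : ℤ × ℤ, F p t := by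
    intro t
    have h1 : ((‖∑' k, a k * e t k‖^2 : ℝ) : ℂ)
        = (∑' k, a k * e t k) * (starRingEnd ℂ) (∑' k, a k * e t k) := by
      rw [Complex.mul_conj, Complex.normSq_eq_norm_sq]
    have h2 : (starRingEnd ℂ) (∑' k, a k * e t k)
        = ∑' k, (starRingEnd ℂ) (a k) * Complex.exp (-((t:ℂ) * k * Complex.I)) := by
      show star (∑' k, a k * e t k) = _
      rw [tsum_star]
      congr 1; funext k
      show (starRingEnd ℂ) (a k * e t k) = _
      rw [map_mul]
      congr 1
      rw [he, ← Complex.exp_conj]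
      congr 1
      simp [Complex.conj_I]
    rw [h1, h2, tsum_mul_tsum_of_summable_norm
      (Summable.congr ha fun k => (hnae t k).symm)
      (Summable.congr ha fun k =>
        (by rw [norm_mul, RCLike.norm_conj, norm_exp_neg_I t k, mul_one] :
          ‖(starRingEnd ℂ) (a k) * Complex.exp (-((t:ℂ) * k * Complex.I))‖ = ‖a k‖).symm)]
    apply tsum_congr
    intro p
    calc a p.1 * e t p.1 * ((starRingEnd ℂ) (a p.2) * Complex.exp (-((t:ℂ) * p.2 * Complex.I)))
        = a p.1 * (starRingEnd ℂ) (a p.2) *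
            (e t p.1 * Complex.exp (-((t:ℂ) * p.2 * Complex.I))) := by ring
      _ = F p t := by
          rw [he, ← Complex.exp_add, hF]
          congr 2
          push_cast; ring
  -- properties of F
  have hFnorm : ∀ (p : ℤ × ℤ) (t : ℝ), ‖F p t‖ = ‖a p.1‖ * ‖a p.2‖ := by
    intro p t
    rw [hF]
    simp only []
    rw [norm_mul, norm_mul, RCLike.norm_conj,
      show ((t:ℂ) * ((p.1:ℂ) - p.2) * Complex.I)
        = (t:ℂ) * ((((p.1:ℝ) - p.2) : ℝ):ℂ) * Complex.I by push_cast; ring,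
      norm_exp_I, mul_one]
  have hFc : ∀ p, Continuous (F p) := by
    intro p
    apply Continuous.mul continuous_const
    exact Complex.continuous_exp.comp
      ((Complex.continuous_ofReal.mul continuous_const).mul continuous_const)
  have hFint : ∀ p : ℤ × ℤ, IntegrableOn (F p) (Set.Ioc (-π) π) := fun p =>
    (hFc p).integrableOn_Ioc
  have hprod : Summable fun p : ℤ×ℤ => ‖a p.1‖ * ‖a p.2‖ :=
    ha.mul_of_nonneg ha (fun k => norm_nonneg _) (fun k => norm_nonneg _)
  have hFsum : Summable fun p : ℤ×ℤ => ∫ t in Set.Ioc (-π) π, ‖F p t‖ := by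
    apply Summable.congr (hprod.mul_left (2*π))
    intro p
    simp only [hFnorm]
    rw [setIntegral_const, Real.volume_real_Ioc_of_le (by linarith [pi_pos] : -π ≤ π), smul_eq_mul]
    ring
  have hswap : (∫ t in Set.Ioc (-π) π, ((‖∑' k, a k * e t k‖^2 : ℝ) : ℂ))
      = ∑' p : ℤ×ℤ, ∫ t in Set.Ioc (-π) π, F p t := by
    simp only [hpoint]
    exact (integral_tsum_of_summable_integral_norm hFint hFsum).symm
  have hsingle : ∀ p : ℤ×ℤ, (∫ t in Set.Ioc (-π) π, F p t)
      = a p.1 * (starRingEnd ℂ) (a p.2) * (if p.1 = p.2 then (2*π:ℂ) else 0) := by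
    intro p
    rw [← intervalIntegral.integral_of_le hπ, hF]
    simp only []
    rw [intervalIntegral.integral_const_mul]
    congr 1
    have h4 : ∀ t:ℝ, Complex.exp ((t:ℂ) * ((p.1:ℂ) - p.2) * Complex.I)
        = Complex.exp ((t:ℂ) * ((p.1 - p.2 : ℤ):ℂ) * Complex.I) := by
      intro t; congr 1; push_cast; ring
    simp_rw [h4]
    rw [integral_exp_int (p.1 - p.2)]
    simp [sub_eq_zero]
  have hnormite : ∀ p : ℤ×ℤ,
      ‖a p.1 * (starRingEnd ℂ) (a p.2) * (if p.1 = p.2 then (2*π:ℂ) else 0)‖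
        ≤ ‖a p.1‖ * ‖a p.2‖ * (2*π) := by
    intro p
    rw [norm_mul, norm_mul, RCLike.norm_conj]
    rcases eq_or_ne p.1 p.2 with h | h
    · rw [if_pos h, show ((2:ℂ)*↑π) = ((2*π:ℝ):ℂ) by push_cast; ring, Complex.norm_real,
        Real.norm_eq_abs, abs_of_nonneg (by linarith [pi_pos] : (0:ℝ) ≤ 2*π)]
    · rw [if_neg h, norm_zero, mul_zero]
      positivity
  have hsummand : Summable fun p : ℤ×ℤ =>
      a p.1 * (starRingEnd ℂ) (a p.2) * (if p.1 = p.2 then (2*π:ℂ) else 0) :=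
    Summable.of_norm_bounded (hprod.mul_right (2*π)) hnormite
  have hfiber : ∀ b : ℤ, Summable fun c : ℤ =>
      a b * (starRingEnd ℂ) (a c) * (if b = c then (2*π:ℂ) else 0) := by
    intro b
    apply Summable.of_norm_bounded ((ha.mul_left ‖a b‖).mul_right (2*π))
    intro c
    exact hnormite (b, c)
  have hdiag : (∑' p : ℤ×ℤ, a p.1 * (starRingEnd ℂ) (a p.2) * (if p.1 = p.2 then (2*π:ℂ) else 0))
      = ∑' k : ℤ, ((‖a k‖^2 * (2*π) : ℝ) : ℂ) := by
    rw [Summable.tsum_prod' hsummand hfiber]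
    congr 1; funext k
    rw [tsum_eq_single k (fun j hj => by rw [if_neg (fun h => hj h.symm), mul_zero])]
    rw [if_pos rfl, Complex.mul_conj, Complex.normSq_eq_norm_sq]
    push_cast; ring
  have hkey : ((∫ t in (-π)..π, ‖∑' k, a k * e t k‖^2 : ℝ) : ℂ)
      = ((2 * π * ∑' k, ‖a k‖^2 : ℝ) : ℂ) := by
    rw [← intervalIntegral.integral_ofReal, intervalIntegral.integral_of_le hπ, hswap,
      tsum_congr hsingle, hdiag, ← Complex.ofReal_tsum]
    rw [tsum_mul_right]
    push_cast; ring
  have := Complex.ofReal_inj.mp hkey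
  exact this


lemma norm_exp_I' (t c : ℝ) : ‖Complex.exp ((t:ℂ) * (c:ℂ) * Complex.I)‖ = 1 := by
  rw [show ((t:ℂ) * c * Complex.I) = ((t*c : ℝ):ℂ) * Complex.I by push_cast; ring,
    Complex.norm_exp_ofReal_mul_I]

lemma fourier_rewrite (M : ℤ → ℝ) (v : ℝ) (s : ℝ) :
    Complex.exp (-((s:ℂ) * v) * Complex.I) * fourierZ M s
      = ∑' k : ℤ, (M k : ℂ) * Complex.exp ((s:ℂ) * ((k:ℂ) - v) * Complex.I) := by
  rw [fourierZ, ← tsum_mul_left]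
  apply tsum_congr
  intro k
  rw [← mul_assoc, mul_comm (Complex.exp _) ((M k : ℂ)), mul_assoc, ← Complex.exp_add]
  congr 2
  push_cast; ring

lemma hasDerivAt_G (M : ℤ → ℝ) (hM : Summable fun k : ℤ => |M k|)
    (hM1 : Summable fun k : ℤ => |(k:ℝ)| * |M k|) (v : ℝ) (t : ℝ) :
    HasDerivAt (fun s : ℝ => Complex.exp (-((s:ℂ) * v) * Complex.I) * fourierZ M s)
      (∑' k : ℤ, ((M k : ℂ) * (((k:ℂ) - v) * Complex.I)) *
        Complex.exp ((t:ℂ) * ((k:ℂ) - v) * Complex.I)) t := by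
  have hfun : (fun s : ℝ => Complex.exp (-((s:ℂ) * v) * Complex.I) * fourierZ M s)
      = fun s : ℝ => ∑' k : ℤ, (M k : ℂ) * Complex.exp ((s:ℂ) * ((k:ℂ) - v) * Complex.I) :=
    funext (fourier_rewrite M v)
  rw [hfun]
  have hnormg' : ∀ (k : ℤ) (y : ℝ),
      ‖(M k : ℂ) * (((k:ℂ) - v) * Complex.I) * Complex.exp ((y:ℂ) * ((k:ℂ) - v) * Complex.I)‖
        ≤ |M k| * (|(k:ℝ)| + |v|) := by
    intro k y
    rw [norm_mul, norm_mul, norm_mul, Complex.norm_I, mul_one,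
      show ((y:ℂ) * ((k:ℂ) - v) * Complex.I) = (y:ℂ) * ((((k:ℝ) - v) : ℝ):ℂ) * Complex.I by
        push_cast; ring,
      norm_exp_I', mul_one, Complex.norm_real, Real.norm_eq_abs,
      show ((k:ℂ) - v) = ((((k:ℝ) - v) : ℝ):ℂ) by push_cast; ring,
      Complex.norm_real, Real.norm_eq_abs]
    have := abs_sub (k:ℝ) v
    have h2 := abs_nonneg (M k)
    nlinarith [abs_sub_abs_le_abs_sub (k:ℝ) v, abs_abs_sub_abs_le_abs_sub (k:ℝ) v,
      abs_nonneg ((k:ℝ) - v), abs_sub ((k:ℝ)) v]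
  refine hasDerivAt_tsum (u := fun k : ℤ => |M k| * (|(k:ℝ)| + |v|))
    (g := fun (k:ℤ) (s:ℝ) => (M k : ℂ) * Complex.exp ((s:ℂ) * ((k:ℂ) - v) * Complex.I))
    (g' := fun (k:ℤ) (y:ℝ) =>
      (M k : ℂ) * (((k:ℂ) - v) * Complex.I) * Complex.exp ((y:ℂ) * ((k:ℂ) - v) * Complex.I))
    (y₀ := t) ?_ ?_ ?_ ?_ t
  · apply Summable.congr ((hM1.add (hM.mul_left |v|)))
    intro k
    push_cast
    ring
  · intro k y
    have h1 : HasDerivAt (fun z : ℂ => Complex.exp (z * (((k:ℂ) - v) * Complex.I)))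
        (Complex.exp ((y:ℂ) * (((k:ℂ) - v) * Complex.I)) * (((k:ℂ) - v) * Complex.I)) (y:ℂ) := by
      simpa using ((hasDerivAt_id ((y:ℂ))).mul_const (((k:ℂ) - v) * Complex.I)).cexp
    have h2 := (h1.comp_ofReal).const_mul ((M k : ℂ))
    simp only [← mul_assoc] at h2
    convert h2 using 1
    · rfl
    · ring
  · exact hnormg'
  · apply Summable.of_norm_bounded hM
    intro k
    rw [norm_mul,
      show ((t:ℂ) * ((k:ℂ) - v) * Complex.I) = (t:ℂ) * ((((k:ℝ) - v) : ℝ):ℂ) * Complex.I by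
        push_cast; ring,
      norm_exp_I', mul_one, Complex.norm_real, Real.norm_eq_abs]


/-- Total variation bound via the Fourier transform and its derivative. -/
theorem total_variation_le_fourier_bound (M : ℤ → ℝ)
    (hM : Summable fun k : ℤ => |M k|)
    (hM1 : Summable fun k : ℤ => |(k : ℝ)| * |M k|) (v : ℝ) (u : ℝ) (hu : 0 < u) :
    (∑' k : ℤ, |M k|) ≤ Real.sqrt (1 + u * π) *
      Real.sqrt ((1 / (2 * π)) * ∫ t in (-π)..π,
        ‖fourierZ M t‖ ^ 2 +
          (1 / u ^ 2) *
            ‖deriv (fun s : ℝ => Complex.exp (-(s * v) * Complex.I) * fourierZ M s) t‖ ^ 2) := by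
  have hπ : (0:ℝ) < π := pi_pos
  set b : ℤ → ℂ := fun k => (M k : ℂ) * (((k:ℂ) - v) * Complex.I) with hb
  have hbnorm : ∀ k : ℤ, ‖b k‖ = |M k| * |(k:ℝ) - v| := by
    intro k
    rw [hb]
    simp only []
    rw [norm_mul, norm_mul, Complex.norm_I, mul_one, Complex.norm_real, Real.norm_eq_abs,
      show ((k:ℂ) - v) = ((((k:ℝ) - v):ℝ):ℂ) by push_cast; ring, Complex.norm_real,
      Real.norm_eq_abs]
  have hanorm : ∀ k : ℤ, ‖((M k : ℂ))‖ = |M k| := fun k => by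
    rw [Complex.norm_real, Real.norm_eq_abs]
  have haM : Summable fun k : ℤ => ‖((M k:ℂ))‖ := Summable.congr hM fun k => (hanorm k).symm
  have hbsum : Summable fun k : ℤ => ‖b k‖ := by
    apply Summable.of_nonneg_of_le (fun k => norm_nonneg _) ?_ (hM1.add (hM.mul_left |v|))
    intro k
    rw [hbnorm]
    nlinarith [abs_nonneg (M k), abs_nonneg ((k:ℝ)), abs_sub ((k:ℝ)) v, abs_nonneg v,
      abs_nonneg ((k:ℝ) - v)]
  have hD : ∀ t : ℝ, deriv (fun s : ℝ => Complex.exp (-(s * v) * Complex.I) * fourierZ M s) t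
      = ∑' k : ℤ, b k * Complex.exp ((t:ℂ) * ((k:ℂ) - v) * Complex.I) := by
    intro t
    have := (hasDerivAt_G M hM hM1 v t).deriv
    rw [← this]
  have hDnorm : ∀ t : ℝ, ‖∑' k : ℤ, b k * Complex.exp ((t:ℂ) * ((k:ℂ) - v) * Complex.I)‖
      = ‖∑' k : ℤ, b k * Complex.exp ((t:ℂ) * (k:ℂ) * Complex.I)‖ := by
    intro t
    have h1 : ∀ k : ℤ, b k * Complex.exp ((t:ℂ) * ((k:ℂ) - v) * Complex.I)
        = (b k * Complex.exp ((t:ℂ) * (k:ℂ) * Complex.I)) *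
          Complex.exp (((-(t*v):ℝ):ℂ) * Complex.I) := by
      intro k
      have h2 : Complex.exp ((t:ℂ) * ((k:ℂ) - v) * Complex.I)
          = Complex.exp ((t:ℂ) * (k:ℂ) * Complex.I) *
            Complex.exp (((-(t*v):ℝ):ℂ) * Complex.I) := by
        rw [← Complex.exp_add]
        congr 1
        push_cast; ring
      rw [h2]
      ring
    simp_rw [h1]
    rw [tsum_mul_right, norm_mul,
      show (((-(t*v):ℝ):ℂ) * Complex.I) = ((-t:ℝ):ℂ) * ((v:ℝ):ℂ) * Complex.I by push_cast; ring,
      norm_exp_I, mul_one]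
  have hFcont : Continuous (fourierZ M) := by
    apply continuous_tsum (u := fun k : ℤ => ‖((M k:ℂ))‖)
    · intro k
      exact continuous_const.mul (Complex.continuous_exp.comp
        ((Complex.continuous_ofReal.mul continuous_const).mul continuous_const))
    · exact haM
    · intro k t
      rw [norm_mul,
        show ((t:ℂ) * (k:ℂ) * Complex.I) = (t:ℂ) * (((k:ℝ)):ℂ) * Complex.I by push_cast; ring,
        norm_exp_I, mul_one]
  have hDcont : Continuous (fun t : ℝ => ∑' k : ℤ, b k * Complex.exp ((t:ℂ)*(k:ℂ)*Complex.I)) := by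
    apply continuous_tsum (u := fun k : ℤ => ‖b k‖)
    · intro k
      exact continuous_const.mul (Complex.continuous_exp.comp
        ((Complex.continuous_ofReal.mul continuous_const).mul continuous_const))
    · exact hbsum
    · intro k t
      rw [norm_mul,
        show ((t:ℂ) * (k:ℂ) * Complex.I) = (t:ℂ) * (((k:ℝ)):ℂ) * Complex.I by push_cast; ring,
        norm_exp_I, mul_one]
  have hig : (fun t : ℝ => ‖fourierZ M t‖^2 + (1/u^2) *
        ‖deriv (fun s : ℝ => Complex.exp (-(s * v) * Complex.I) * fourierZ M s) t‖^2)
      = fun t : ℝ => ‖∑' k : ℤ, (M k:ℂ) * Complex.exp ((t:ℂ)*(k:ℂ)*Complex.I)‖^2 + (1/u^2) *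
        ‖∑' k : ℤ, b k * Complex.exp ((t:ℂ)*(k:ℂ)*Complex.I)‖^2 := by
    funext t
    rw [hD t, hDnorm t]
    rfl
  have hi1 : IntervalIntegrable (fun t : ℝ => ‖fourierZ M t‖^2) volume (-π) π :=
    (hFcont.norm.pow 2).intervalIntegrable _ _
  have hi1' : IntervalIntegrable
      (fun t : ℝ => ‖∑' k : ℤ, (M k:ℂ) * Complex.exp ((t:ℂ)*(k:ℂ)*Complex.I)‖^2)
      volume (-π) π := hi1
  have hi2 : IntervalIntegrable
      (fun t : ℝ => ‖∑' k : ℤ, b k * Complex.exp ((t:ℂ)*(k:ℂ)*Complex.I)‖^2) volume (-π) π :=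
    (hDcont.norm.pow 2).intervalIntegrable _ _
  have hsq1 : Summable fun k : ℤ => ‖((M k:ℂ))‖^2 := summable_sq haM
  have hsq2 : Summable fun k : ℤ => ‖b k‖^2 := summable_sq hbsum
  have hintval : (∫ t in (-π)..π, (‖fourierZ M t‖^2 + (1/u^2) *
        ‖deriv (fun s : ℝ => Complex.exp (-(s * v) * Complex.I) * fourierZ M s) t‖^2))
      = 2*π*(∑' k : ℤ, ‖((M k:ℂ))‖^2) + (1/u^2) * (2*π*(∑' k : ℤ, ‖b k‖^2)) := by
    rw [hig, intervalIntegral.integral_add hi1' (hi2.const_mul (1/u^2)),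
      intervalIntegral.integral_const_mul, parseval _ haM, parseval b hbsum]
  have htermwise : ∀ k : ℤ,
      ‖((M k:ℂ))‖^2 + (1/u^2) * ‖b k‖^2 = (1 + ((k:ℝ)-v)^2/u^2) * M k^2 := by
    intro k
    rw [hanorm k, hbnorm k, mul_pow, sq_abs, sq_abs]
    ring
  have hwsum : Summable fun k : ℤ => (1 + ((k:ℝ)-v)^2/u^2) * M k^2 :=
    Summable.congr (hsq1.add (hsq2.mul_left (1/u^2))) htermwise
  have harg : (1 / (2 * π)) * (∫ t in (-π)..π, (‖fourierZ M t‖^2 + (1/u^2) *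
        ‖deriv (fun s : ℝ => Complex.exp (-(s * v) * Complex.I) * fourierZ M s) t‖^2))
      = ∑' k : ℤ, (1 + ((k:ℝ)-v)^2/u^2) * M k^2 := by
    rw [hintval, ← tsum_congr htermwise,
      Summable.tsum_add hsq1 (hsq2.mul_left (1/u^2)), tsum_mul_left]
    field_simp
  -- Cauchy-Schwarz step
  have hCS : (∑' k : ℤ, |M k|) ≤ Real.sqrt (1 + u * π) *
      Real.sqrt (∑' k : ℤ, (1 + ((k:ℝ)-v)^2/u^2) * M k^2) := by
    apply Summable.tsum_le_of_sum_le hM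
    intro s
    have hw1 : ∀ k : ℤ, (0:ℝ) < 1 + ((k:ℝ)-v)^2/u^2 := fun k => by positivity
    have hfin := Finset.sum_mul_sq_le_sq_mul_sq s
      (fun k : ℤ => Real.sqrt ((1 + ((k:ℝ)-v)^2/u^2)⁻¹))
      (fun k : ℤ => Real.sqrt (1 + ((k:ℝ)-v)^2/u^2) * |M k|)
    have hL : ∀ k : ℤ, Real.sqrt ((1 + ((k:ℝ)-v)^2/u^2)⁻¹) *
        (Real.sqrt (1 + ((k:ℝ)-v)^2/u^2) * |M k|) = |M k| := by
      intro k
      rw [← mul_assoc, ← Real.sqrt_mul (by positivity),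
        inv_mul_cancel₀ (hw1 k).ne', Real.sqrt_one, one_mul]
    have hsq : ∀ k : ℤ, (Real.sqrt ((1 + ((k:ℝ)-v)^2/u^2)⁻¹))^2
        = (1 + ((k:ℝ)-v)^2/u^2)⁻¹ := fun k => Real.sq_sqrt (by positivity)
    have hsq' : ∀ k : ℤ, (Real.sqrt (1 + ((k:ℝ)-v)^2/u^2) * |M k|)^2
        = (1 + ((k:ℝ)-v)^2/u^2) * M k^2 := by
      intro k
      rw [mul_pow, Real.sq_sqrt (hw1 k).le, sq_abs]
    simp only [hL, hsq, hsq'] at hfin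
    have hA := finsum_bound u v hu s
    have hB : ∑ k ∈ s, (1 + ((k:ℝ)-v)^2/u^2) * M k^2
        ≤ ∑' k : ℤ, (1 + ((k:ℝ)-v)^2/u^2) * M k^2 :=
      Summable.sum_le_tsum s (fun k _ => by positivity) hwsum
    have h0 : (0:ℝ) ≤ ∑ k ∈ s, |M k| := Finset.sum_nonneg fun k _ => abs_nonneg _
    have hBpos : (0:ℝ) ≤ ∑' k : ℤ, (1 + ((k:ℝ)-v)^2/u^2) * M k^2 :=
      tsum_nonneg fun k => by positivity
    calc ∑ k ∈ s, |M k| = Real.sqrt ((∑ k ∈ s, |M k|)^2) := (Real.sqrt_sq h0).symm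
      _ ≤ Real.sqrt ((1 + u*π) * (∑' k : ℤ, (1 + ((k:ℝ)-v)^2/u^2) * M k^2)) := by
          apply Real.sqrt_le_sqrt
          calc (∑ k ∈ s, |M k|)^2
              ≤ (∑ k ∈ s, (1 + ((k:ℝ)-v)^2/u^2)⁻¹) *
                (∑ k ∈ s, (1 + ((k:ℝ)-v)^2/u^2) * M k^2) := hfin
            _ ≤ (1 + u*π) * (∑' k : ℤ, (1 + ((k:ℝ)-v)^2/u^2) * M k^2) := by
                apply mul_le_mul hA hB (Finset.sum_nonneg fun k _ => by positivity)
                  (by positivity)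
      _ = Real.sqrt (1 + u*π) * Real.sqrt (∑' k : ℤ, (1 + ((k:ℝ)-v)^2/u^2) * M k^2) :=
          Real.sqrt_mul (by positivity) _
  rw [show (1 / (2 * π)) * (∫ t in (-π)..π, (‖fourierZ M t‖^2 + (1/u^2) *
        ‖deriv (fun s : ℝ => Complex.exp (-(s * v) * Complex.I) * fourierZ M s) t‖^2))
      = ∑' k : ℤ, (1 + ((k:ℝ)-v)^2/u^2) * M k^2 from harg]
  exact hCS
end

section
/- Let U = δ_1 − δ_0, t > 0 and j ≥ 1 an integer. Then ‖U^j e^{tU}‖ ≤ (2j/(te))^{j/2}, where U^j is the j-fold convolution power and e^{tU} is the convolution exponential. -/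
open Real

/-- Convolution of two (signed) measures on ℤ, identified with their point-mass
sequences. -/
noncomputable def convZ (f g : ℤ → ℝ) : ℤ → ℝ := fun n => ∑' k : ℤ, f k * g (n - k)

/-- Convolution powers, with `f^0 = δ_0`. -/
noncomputable def convPow (f : ℤ → ℝ) : ℕ → ℤ → ℝ
  | 0 => fun n => if n = 0 then 1 else 0
  | j + 1 => convZ f (convPow f j)

/-- Convolution exponential `exp(f) = Σ_{j≥0} f^{*j}/j!`. -/
noncomputable def convExp (f : ℤ → ℝ) : ℤ → ℝ :=
  fun n => ∑' j : ℕ, convPow f j n / (j.factorial : ℝ)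

/-- The measure `U = δ_1 − δ_0` on ℤ. -/
noncomputable def Umeas : ℤ → ℝ := fun n => if n = 1 then 1 else if n = 0 then -1 else 0

/-- Total variation norm of a measure on ℤ. -/
noncomputable def tvNorm (f : ℤ → ℝ) : ℝ := ∑' n : ℤ, |f n|

/-- Local norm of a measure on ℤ. -/
noncomputable def locNorm (f : ℤ → ℝ) : ℝ := ⨆ n : ℤ, |f n|

-- ### auxiliary

/-- discrete derivative -/
noncomputable def Dz (f : ℤ → ℝ) : ℤ → ℝ := fun n => f (n - 1) - f n

/-- Poisson-type family -/
noncomputable def Pois (s : ℝ) : ℤ → ℝ :=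
  fun n => if 0 ≤ n then Real.exp (-s) * s ^ n.toNat / (n.toNat.factorial : ℝ) else 0

section basics

variable {f g : ℤ → ℝ}

lemma tvNorm_nonneg (f : ℤ → ℝ) : 0 ≤ tvNorm f := tsum_nonneg fun _ => abs_nonneg _

lemma abs_le_tvNorm (hf : Summable fun n => |f n|) (m : ℤ) : |f m| ≤ tvNorm f :=
  Summable.le_tsum hf m fun _ _ => abs_nonneg _

/-- the convolution kernel equivalence -/
def convEquiv : ℤ × ℤ ≃ ℤ × ℤ where
  toFun p := (p.1 + p.2, p.1)
  invFun p := (p.2, p.1 - p.2)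
  left_inv p := by simp
  right_inv p := by simp

lemma summable_conv_kernel (hf : Summable fun n => |f n|) (hg : Summable fun n => |g n|) :
    Summable fun p : ℤ × ℤ => |f p.2 * g (p.1 - p.2)| := by
  have h : Summable fun p : ℤ × ℤ => |f p.1| * |g p.2| :=
    hf.mul_of_nonneg hg (fun _ => abs_nonneg _) fun _ => abs_nonneg _
  have := (convEquiv.summable_iff
    (f := fun p : ℤ × ℤ => |f p.2 * g (p.1 - p.2)|)).mp ?_
  · exact this
  · refine h.congr fun p => ?_
    simp [convEquiv, abs_mul]

lemma summable_conv_slice (hf : Summable fun n => |f n|) (hg : Summable fun n => |g n|)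
    (n : ℤ) : Summable fun k => |f k * g (n - k)| :=
  (summable_conv_kernel hf hg).prod_factor n

lemma summable_conv_slice' (hf : Summable fun n => |f n|) (hg : Summable fun n => |g n|)
    (n : ℤ) : Summable fun k => f k * g (n - k) :=
  (summable_conv_slice hf hg n).of_abs

lemma abs_convZ_le (hf : Summable fun n => |f n|) (hg : Summable fun n => |g n|) (n : ℤ) :
    |convZ f g n| ≤ ∑' k, |f k * g (n - k)| := by
  have hs : Summable fun k => ‖f k * g (n - k)‖ := by
    simpa [Real.norm_eq_abs] using (summable_conv_slice hf hg n).congr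
      fun k => (abs_mul (f k) (g (n - k)))
  have h := norm_tsum_le_tsum_norm hs
  simp only [Real.norm_eq_abs] at h
  exact h

lemma summable_abs_convZ (hf : Summable fun n => |f n|) (hg : Summable fun n => |g n|) :
    Summable fun n => |convZ f g n| := by
  have hK := summable_conv_kernel hf hg
  have h2 : Summable fun n : ℤ => ∑' k, |f k * g (n - k)| :=
    ((summable_prod_of_nonneg fun p => abs_nonneg _).mp hK).2
  exact Summable.of_nonneg_of_le (fun _ => abs_nonneg _) (abs_convZ_le hf hg) h2

lemma tvNorm_convZ_le (hf : Summable fun n => |f n|) (hg : Summable fun n => |g n|) :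
    tvNorm (convZ f g) ≤ tvNorm f * tvNorm g := by
  have hK := summable_conv_kernel hf hg
  have h2 : Summable fun n : ℤ => ∑' k, |f k * g (n - k)| :=
    ((summable_prod_of_nonneg fun p => abs_nonneg _).mp hK).2
  have step1 : tvNorm (convZ f g) ≤ ∑' n : ℤ, ∑' k, |f k * g (n - k)| :=
    Summable.tsum_le_tsum (abs_convZ_le hf hg) (summable_abs_convZ hf hg) h2
  have step2 : ∑' n : ℤ, ∑' k : ℤ, |f k * g (n - k)|
      = ∑' p : ℤ × ℤ, |f p.2 * g (p.1 - p.2)| :=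
    (Summable.tsum_prod' hK hK.prod_factor).symm
  have step3 : ∑' p : ℤ × ℤ, |f p.2 * g (p.1 - p.2)|
      = ∑' p : ℤ × ℤ, |f p.1| * |g p.2| := by
    rw [← convEquiv.tsum_eq (f := fun p : ℤ × ℤ => |f p.2 * g (p.1 - p.2)|)]
    refine tsum_congr fun p => ?_
    simp [convEquiv, abs_mul]
  have hfg : Summable fun p : ℤ × ℤ => |f p.1| * |g p.2| :=
    hf.mul_of_nonneg hg (fun _ => abs_nonneg _) fun _ => abs_nonneg _
  have step4 : ∑' p : ℤ × ℤ, |f p.1| * |g p.2| = tvNorm f * tvNorm g := by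
    rw [Summable.tsum_prod' hfg hfg.prod_factor]
    simp only [tsum_mul_left, tsum_mul_right]
    rfl
  calc tvNorm (convZ f g) ≤ _ := step1
    _ = _ := step2
    _ = _ := step3
    _ = _ := step4

end basics


section dz

variable {f g : ℤ → ℝ}

noncomputable def deltaZ : ℤ → ℝ := fun n => if n = 0 then 1 else 0

lemma convPow_zero (f : ℤ → ℝ) : convPow f 0 = deltaZ := rfl

lemma convZ_delta_right (f : ℤ → ℝ) : convZ f deltaZ = f := by
  funext n
  have : ∀ k : ℤ, k ≠ n → f k * deltaZ (n - k) = 0 := by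
    intro k hk
    have : n - k ≠ 0 := by omega
    simp [deltaZ, this]
  rw [convZ]
  rw [tsum_eq_single n this]
  simp [deltaZ]

lemma convZ_delta_left (g : ℤ → ℝ) : convZ deltaZ g = g := by
  funext n
  have : ∀ k : ℤ, k ≠ 0 → deltaZ k * g (n - k) = 0 := by
    intro k hk; simp [deltaZ, hk]
  rw [convZ, tsum_eq_single 0 this]
  simp [deltaZ]

lemma convZ_U (g : ℤ → ℝ) : convZ Umeas g = Dz g := by
  funext n
  have h : ∀ k : ℤ, k ∉ ({0, 1} : Finset ℤ) → Umeas k * g (n - k) = 0 := by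
    intro k hk
    simp only [Finset.mem_insert, Finset.mem_singleton] at hk
    push_neg at hk
    simp [Umeas, hk.1, hk.2]
  rw [convZ, tsum_eq_sum h]
  simp [Umeas, Dz]
  ring

lemma summable_abs_shift (hf : Summable fun n => |f n|) (c : ℤ) :
    Summable fun n => |f (n - c)| := by
  have := ((Equiv.subRight c).summable_iff (f := fun n => |f n|)).mpr hf
  simpa [Equiv.subRight, Function.comp_def] using this

lemma summable_abs_Dz (hf : Summable fun n => |f n|) : Summable fun n => |Dz f n| := by
  refine Summable.of_nonneg_of_le (fun _ => abs_nonneg _)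
    (fun n => abs_sub (f (n - 1)) (f n)) ((summable_abs_shift hf 1).add hf)

lemma convZ_Dz_left (hf : Summable fun n => |f n|) (hg : Summable fun n => |g n|) :
    convZ (Dz f) g = Dz (convZ f g) := by
  funext n
  have h1 : Summable fun k : ℤ => f (k - 1) * g (n - k) := by
    have := ((Equiv.subRight (1:ℤ)).summable_iff
      (f := fun k => f k * g ((n - 1) - k))).mpr (summable_conv_slice' hf hg (n-1))
    refine this.congr fun k => ?_
    simp only [Function.comp_apply, Equiv.subRight_apply]
    have h3 : n - 1 - (k - 1) = n - k := by ring
    rw [h3]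
  have h2 : Summable fun k : ℤ => f k * g (n - k) := summable_conv_slice' hf hg n
  have key : convZ (Dz f) g n
      = (∑' k : ℤ, f (k - 1) * g (n - k)) - ∑' k : ℤ, f k * g (n - k) := by
    rw [convZ, ← Summable.tsum_sub h1 h2]
    refine tsum_congr fun k => ?_
    simp [Dz]; ring
  have shift : (∑' k : ℤ, f (k - 1) * g (n - k)) = convZ f g (n - 1) := by
    rw [convZ]
    rw [← (Equiv.subRight (1:ℤ)).tsum_eq (f := fun k => f k * g (n - 1 - k))]
    refine tsum_congr fun k => ?_
    simp only [Equiv.subRight_apply]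
    have h3 : n - 1 - (k - 1) = n - k := by ring
    rw [h3]
  rw [key, shift]
  rfl

lemma convZ_Dz_right (hf : Summable fun n => |f n|) (hg : Summable fun n => |g n|) :
    convZ f (Dz g) = Dz (convZ f g) := by
  funext n
  have h1 : Summable fun k : ℤ => f k * g (n - 1 - k) := summable_conv_slice' hf hg (n-1)
  have h2 : Summable fun k : ℤ => f k * g (n - k) := summable_conv_slice' hf hg n
  have key : convZ f (Dz g) n
      = (∑' k : ℤ, f k * g (n - 1 - k)) - ∑' k : ℤ, f k * g (n - k) := by
    rw [convZ, ← Summable.tsum_sub h1 h2]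
    refine tsum_congr fun k => ?_
    have : n - k - 1 = n - 1 - k := by ring
    simp [Dz, this]; ring
  rw [key]; rfl

lemma summable_abs_Dz_iter (hf : Summable fun n => |f n|) (m : ℕ) :
    Summable fun n => |Dz^[m] f n| := by
  induction m with
  | zero => simpa using hf
  | succ m ih =>
      rw [Function.iterate_succ_apply']
      exact summable_abs_Dz ih

lemma convZ_Dz_right_iter (hf : Summable fun n => |f n|) (hg : Summable fun n => |g n|)
    (m : ℕ) : convZ f (Dz^[m] g) = Dz^[m] (convZ f g) := by
  induction m generalizing g with
  | zero => rfl
  | succ m ih =>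
      rw [Function.iterate_succ_apply, Function.iterate_succ_apply,
        ih (summable_abs_Dz hg), convZ_Dz_right hf hg]

lemma summable_abs_U : Summable fun n => |Umeas n| := by
  apply summable_of_ne_finset_zero (s := ({0, 1} : Finset ℤ))
  intro k hk
  simp only [Finset.mem_insert, Finset.mem_singleton] at hk
  push_neg at hk
  simp [Umeas, hk.1, hk.2]

lemma summable_abs_delta : Summable fun n => |deltaZ n| := by
  apply summable_of_ne_finset_zero (s := ({0} : Finset ℤ))
  intro k hk
  simp only [Finset.mem_singleton] at hk
  simp [deltaZ, hk]

lemma summable_abs_convPow (hf : Summable fun n => |f n|) (m : ℕ) :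
    Summable fun n => |convPow f m n| := by
  induction m with
  | zero => exact summable_abs_delta
  | succ m ih => exact summable_abs_convZ hf ih

lemma convZ_powU (hg : Summable fun n => |g n|) (j : ℕ) :
    convZ (convPow Umeas j) g = Dz^[j] g := by
  induction j with
  | zero => exact convZ_delta_left g
  | succ j ih =>
      have : convPow Umeas (j + 1) = Dz (convPow Umeas j) := convZ_U _
      rw [this, convZ_Dz_left (summable_abs_convPow summable_abs_U j) hg, ih,
        ← Function.iterate_succ_apply' Dz j g]

lemma convPow_Dz (hf : Summable fun n => |f n|) (j : ℕ) :
    convPow (Dz f) j = Dz^[j] (convPow f j) := by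
  induction j with
  | zero => rfl
  | succ j ih =>
      show convZ (Dz f) (convPow (Dz f) j) = _
      rw [ih, convZ_Dz_left hf (summable_abs_Dz_iter (summable_abs_convPow hf j) j),
        convZ_Dz_right_iter hf (summable_abs_convPow hf j) j,
        ← Function.iterate_succ_apply' Dz j, Function.iterate_succ_apply]
      rfl

lemma tvNorm_convPow_le (hg : Summable fun n => |g n|) (j : ℕ) (hj : 1 ≤ j) :
    tvNorm (convPow g j) ≤ (tvNorm g) ^ j := by
  induction j with
  | zero => omega
  | succ j ih =>
      rcases Nat.eq_or_lt_of_le hj with h1 | h1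
      · have : convPow g 1 = g := by
          show convZ g deltaZ = g
          exact convZ_delta_right g
        rw [← h1, this, pow_one]
      · have hj' : 1 ≤ j := by omega
        calc tvNorm (convPow g (j+1)) = tvNorm (convZ g (convPow g j)) := rfl
          _ ≤ tvNorm g * tvNorm (convPow g j) :=
              tvNorm_convZ_le hg (summable_abs_convPow hg j)
          _ ≤ tvNorm g * (tvNorm g) ^ j := by
              have := ih hj'
              exact mul_le_mul_of_nonneg_left this (tvNorm_nonneg g)
          _ = (tvNorm g) ^ (j + 1) := by ring

end dz

section pois

lemma tsum_int_of_nonneg_support {f : ℤ → ℝ} (h : ∀ n : ℤ, n < 0 → f n = 0) :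
    ∑' n : ℤ, f n = ∑' k : ℕ, f k := by
  refine (Function.Injective.tsum_eq (fun a b hab => by exact_mod_cast hab) ?_).symm
  intro x hx
  rcases lt_or_ge x 0 with h1 | h1
  · exact absurd (h x h1) hx
  · exact ⟨x.toNat, Int.toNat_of_nonneg h1⟩

lemma summable_int_of_nonneg_support {f : ℤ → ℝ} (h : ∀ n : ℤ, n < 0 → f n = 0)
    (hs : Summable fun k : ℕ => f k) : Summable f := by
  refine (Function.Injective.summable_iff (g := fun k : ℕ => (k : ℤ))
    (fun a b hab => by simpa using hab) ?_).mp ?_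
  · intro x hx
    rcases lt_or_ge x 0 with h1 | h1
    · exact h x h1
    · exact absurd ⟨x.toNat, Int.toNat_of_nonneg h1⟩ hx
  · simpa [Function.comp_def] using hs

lemma Pois_nonneg {s : ℝ} (hs : 0 ≤ s) (n : ℤ) : 0 ≤ Pois s n := by
  rw [Pois]
  split
  · positivity
  · exact le_refl 0

lemma Pois_neg {s : ℝ} {n : ℤ} (hn : n < 0) : Pois s n = 0 := by
  rw [Pois]; rw [if_neg (by omega)]

lemma Pois_natCast (s : ℝ) (k : ℕ) :
    Pois s (k : ℤ) = Real.exp (-s) * s ^ k / (k.factorial : ℝ) := by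
  rw [Pois, if_pos (by positivity)]
  simp

lemma summable_abs_Pois {s : ℝ} (hs : 0 ≤ s) : Summable fun n => |Pois s n| := by
  have : ∀ n : ℤ, |Pois s n| = Pois s n := fun n => abs_of_nonneg (Pois_nonneg hs n)
  simp only [this]
  refine summable_int_of_nonneg_support (fun n hn => Pois_neg hn) ?_
  have : Summable fun k : ℕ => Real.exp (-s) * (s ^ k / (k.factorial : ℝ)) :=
    (Real.summable_pow_div_factorial s).mul_left _
  refine this.congr fun k => ?_
  rw [Pois_natCast]; ring

lemma convZ_Pois {a b : ℝ} (ha : 0 ≤ a) (hb : 0 ≤ b) :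
    convZ (Pois a) (Pois b) = Pois (a + b) := by
  funext n
  rcases lt_or_ge n 0 with hn | hn
  · rw [Pois_neg hn, convZ]
    convert tsum_zero with k
    rcases lt_or_ge k 0 with hk | hk
    · rw [Pois_neg hk, zero_mul]
    · have : n - k < 0 := by omega
      rw [Pois_neg this, mul_zero]
  · -- n ≥ 0
    set N := n.toNat with hN
    have hnN : (N : ℤ) = n := Int.toNat_of_nonneg hn
    have hzero : ∀ k : ℕ, k ∉ Finset.range (N + 1) → Pois a k * Pois b (n - k) = 0 := by
      intro k hk
      simp only [Finset.mem_range] at hk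
      have : n - (k : ℤ) < 0 := by omega
      rw [Pois_neg this, mul_zero]
    have hsupp : ∀ m : ℤ, m < 0 → Pois a m * Pois b (n - m) = 0 := fun m hm => by
      rw [Pois_neg hm, zero_mul]
    rw [convZ, tsum_int_of_nonneg_support hsupp, tsum_eq_sum hzero]
    have hterm : ∀ k ∈ Finset.range (N + 1),
        Pois a k * Pois b (n - k)
          = Real.exp (-(a+b)) / (N.factorial : ℝ)
              * (a ^ k * b ^ (N - k) * (N.choose k : ℝ)) := by
      intro k hk
      simp only [Finset.mem_range] at hk
      have hkN : k ≤ N := by omega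
      have h1 : n - (k : ℤ) = ((N - k : ℕ) : ℤ) := by
        push_cast [Nat.cast_sub hkN]; omega
      rw [Pois_natCast, h1, Pois_natCast]
      rw [Nat.cast_choose ℝ hkN]
      rw [Real.exp_neg, Real.exp_neg, Real.exp_neg, Real.exp_add]
      have hk1 : (k.factorial : ℝ) ≠ 0 := by positivity
      have hk2 : ((N - k).factorial : ℝ) ≠ 0 := by positivity
      have hk3 : (N.factorial : ℝ) ≠ 0 := by positivity
      have he1 : Real.exp a ≠ 0 := Real.exp_ne_zero a
      have he2 : Real.exp b ≠ 0 := Real.exp_ne_zero b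
      field_simp
    rw [Finset.sum_congr rfl hterm, ← Finset.mul_sum]
    have hbin : ∑ k ∈ Finset.range (N + 1), a ^ k * b ^ (N - k) * (N.choose k : ℝ)
        = (a + b) ^ N := (add_pow a b N).symm
    rw [hbin, Pois, if_pos hn, ← hN]
    ring

lemma convPow_Pois {s : ℝ} (hs : 0 ≤ s) (j : ℕ) :
    convPow (Pois s) (j + 1) = Pois ((j + 1) * s) := by
  induction j with
  | zero =>
      show convZ (Pois s) deltaZ = _
      rw [convZ_delta_right]
      norm_num
  | succ j ih =>
      show convZ (Pois s) (convPow (Pois s) (j + 1)) = _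
      rw [ih, convZ_Pois hs (by positivity)]
      have : s + (↑j + 1) * s = (↑(j + 1) + 1) * s := by push_cast; ring
      rw [this]

end pois

section upow

lemma convPow_U_apply (j : ℕ) (n : ℤ) :
    convPow Umeas j n =
      if 0 ≤ n then (-1:ℝ)^j * (-1)^(n.toNat) * (j.choose n.toNat : ℝ) else 0 := by
  induction j generalizing n with
  | zero =>
      show deltaZ n = _
      rcases lt_trichotomy n 0 with hn | hn | hn
      · rw [if_neg (by omega)]
        have hne : n ≠ 0 := by omega
        simp [deltaZ, hne]
      · subst hn; simp [deltaZ]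
      · rw [if_pos (by omega)]
        have hk : 1 ≤ n.toNat := by omega
        rw [Nat.choose_eq_zero_of_lt (by omega)]
        have hne : n ≠ 0 := by omega
        simp [deltaZ, hne]
  | succ j ih =>
      have h : convPow Umeas (j+1) = Dz (convPow Umeas j) := convZ_U _
      rw [h]
      show convPow Umeas j (n - 1) - convPow Umeas j n = _
      rw [ih, ih]
      rcases lt_trichotomy n 0 with hn | hn | hn
      · rw [if_neg (by omega), if_neg (by omega), if_neg (by omega)]
        ring
      · subst hn
        rw [if_neg (by omega), if_pos le_rfl, if_pos le_rfl]
        simp [pow_succ]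
      · -- n ≥ 1
        obtain ⟨m, hm⟩ : ∃ m : ℕ, n.toNat = m + 1 := ⟨n.toNat - 1, by omega⟩
        have h1 : (n - 1).toNat = m := by omega
        rw [if_pos (by omega : (0:ℤ) ≤ n - 1), if_pos (by omega : (0:ℤ) ≤ n),
          if_pos (by omega : (0:ℤ) ≤ n), h1, hm]
        rw [Nat.choose_succ_succ' j m]
        push_cast
        ring

lemma convPow_smul (t : ℝ) (f : ℤ → ℝ) (j : ℕ) :
    convPow (fun n => t * f n) j = fun n => t ^ j * convPow f j n := by
  induction j with
  | zero =>
      funext n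
      rw [pow_zero, one_mul]
      rfl
  | succ j ih =>
      funext n
      show convZ _ _ n = _
      rw [ih]
      show (∑' k : ℤ, (t * f k) * (t ^ j * convPow f j (n - k))) = _
      have : ∀ k : ℤ, (t * f k) * (t ^ j * convPow f j (n - k))
          = t ^ (j+1) * (f k * convPow f j (n - k)) := fun k => by ring
      rw [tsum_congr this, tsum_mul_left]
      rfl

lemma convExp_tU (t : ℝ) : convExp (fun n => t * Umeas n) = Pois t := by
  funext n
  rw [convExp]
  have hsmul : ∀ j : ℕ, convPow (fun n => t * Umeas n) j n = t ^ j * convPow Umeas j n :=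
    fun j => by rw [convPow_smul]
  rcases lt_or_ge n 0 with hn | hn
  · rw [Pois_neg hn]
    convert tsum_zero with j
    rw [hsmul j, convPow_U_apply, if_neg (by omega)]
    simp
  · set k := n.toNat with hk
    have hterm : ∀ j : ℕ, convPow (fun n => t * Umeas n) j n / (j.factorial : ℝ)
        = t ^ j * ((-1:ℝ)^j * (-1)^k * (j.choose k : ℝ)) / (j.factorial : ℝ) := by
      intro j
      rw [hsmul j, convPow_U_apply, if_pos hn]
    simp only [hterm]
    have htail : (fun i : ℕ => t ^ (i+k) * ((-1:ℝ)^(i+k) * (-1)^k * (((i+k).choose k) : ℝ))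
          / ((i+k).factorial : ℝ))
        = fun i : ℕ => (t ^ k / (k.factorial : ℝ)) * ((-t) ^ i / (i.factorial : ℝ)) := by
      funext i
      have hkk : k ≤ i + k := Nat.le_add_left k i
      have hsign : (-1:ℝ)^(i+k) * (-1)^k = (-1)^i := by
        rw [pow_add, mul_assoc, ← mul_pow]; norm_num
      rw [hsign, Nat.cast_choose ℝ hkk]
      have h2 : i + k - k = i := by omega
      rw [h2]
      have hne1 : (k.factorial : ℝ) ≠ 0 := by positivity
      have hne2 : (i.factorial : ℝ) ≠ 0 := by positivity
      have hne3 : ((i+k).factorial : ℝ) ≠ 0 := by positivity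
      field_simp
      rw [pow_add, neg_pow t i]
      ring
    have hsummable : Summable fun i : ℕ =>
        t ^ (i+k) * ((-1:ℝ)^(i+k) * (-1)^k * (((i+k).choose k) : ℝ)) / ((i+k).factorial : ℝ) := by
      rw [htail]
      exact (Real.summable_pow_div_factorial (-t)).mul_left _
    rw [← Summable.sum_add_tsum_nat_add' (f := fun j : ℕ =>
      t ^ j * ((-1:ℝ)^j * (-1)^k * ((j.choose k) : ℝ)) / (j.factorial : ℝ)) hsummable]
    have hzero : ∀ j ∈ Finset.range k,
        t ^ j * ((-1:ℝ)^j * (-1)^k * ((j.choose k) : ℝ)) / (j.factorial : ℝ) = 0 := by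
      intro j hj
      simp only [Finset.mem_range] at hj
      rw [Nat.choose_eq_zero_of_lt hj]
      simp
    rw [Finset.sum_congr rfl hzero, Finset.sum_const_zero, zero_add, htail, tsum_mul_left]
    have hexp : ∑' i : ℕ, (-t) ^ i / (i.factorial : ℝ) = Real.exp (-t) := by
      rw [Real.exp_eq_exp_ℝ, NormedSpace.exp_eq_tsum_div]
    rw [hexp, Pois, if_pos hn]
    ring

end upow

section telescope

lemma tvNorm_Dz_Pois {s : ℝ} (hs : 0 < s) :
    tvNorm (Dz (Pois s)) =
      2 * (Real.exp (-s) * s ^ (⌊s⌋.toNat) / ((⌊s⌋.toNat).factorial : ℝ)) := by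
  set m := (⌊s⌋).toNat with hm
  set q : ℕ → ℝ := fun k => Real.exp (-s) * s ^ k / (k.factorial : ℝ) with hq
  have hq0 : ∀ k, 0 ≤ q k := fun k => by rw [hq]; positivity
  have hqs : Summable q := by
    have : Summable fun k : ℕ => Real.exp (-s) * (s ^ k / (k.factorial : ℝ)) :=
      (Real.summable_pow_div_factorial s).mul_left _
    exact this.congr fun k => by rw [hq]; ring
  have hfl0 : (0:ℤ) ≤ ⌊s⌋ := Int.floor_nonneg.mpr hs.le
  have hmcast : ((m:ℤ):ℝ) = ((⌊s⌋:ℤ):ℝ) := by rw [hm, Int.toNat_of_nonneg hfl0]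
  have hms : (m:ℝ) ≤ s := by
    have := Int.floor_le s
    rw [← hmcast] at this
    exact_mod_cast this
  have hsm1 : s ≤ (m:ℝ) + 1 := by
    have := Int.lt_floor_add_one s
    rw [← hmcast] at this
    push_cast at this ⊢
    linarith
  have q_succ : ∀ k : ℕ, q (k+1) = q k * (s / ((k:ℝ)+1)) := by
    intro k
    rw [hq]
    simp only [Nat.factorial_succ, pow_succ]
    have h1 : ((k+1) * k.factorial : ℕ) = (k+1) * k.factorial := rfl
    push_cast
    have hk1 : ((k:ℝ)+1) ≠ 0 := by positivity
    have hk2 : ((k.factorial : ℝ)) ≠ 0 := by positivity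
    field_simp
  have hmono_up : ∀ k : ℕ, (k:ℝ) + 1 ≤ s → q k ≤ q (k+1) := by
    intro k hk
    rw [q_succ k]
    exact le_mul_of_one_le_right (hq0 k) ((one_le_div (by positivity)).mpr hk)
  have hmono_dn : ∀ k : ℕ, s ≤ (k:ℝ) + 1 → q (k+1) ≤ q k := by
    intro k hk
    rw [q_succ k]
    exact mul_le_of_le_one_right (hq0 k) ((div_le_one (by positivity)).mpr hk)
  set a : ℕ → ℝ := fun kk => |Pois s ((kk:ℤ) - 1) - Pois s (kk:ℤ)| with ha
  have step0 : tvNorm (Dz (Pois s)) = ∑' kk : ℕ, a kk := by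
    rw [tvNorm]
    refine tsum_int_of_nonneg_support (f := fun n => |Dz (Pois s) n|) fun n hn => ?_
    simp only [Dz]
    rw [Pois_neg (by omega : n - 1 < 0), Pois_neg hn, sub_zero, abs_zero]
  have a0 : a 0 = q 0 := by
    rw [ha]
    simp only [Nat.cast_zero, zero_sub]
    rw [Pois_neg (by omega : (-1:ℤ) < 0)]
    have : Pois s (0:ℤ) = q 0 := by
      have := Pois_natCast s 0
      simpa [hq] using this
    rw [this, zero_sub, abs_neg, abs_of_nonneg (hq0 0)]
  have asucc : ∀ k : ℕ, a (k+1) = |q k - q (k+1)| := by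
    intro k
    show |Pois s (((k+1:ℕ):ℤ) - 1) - Pois s ((k+1:ℕ):ℤ)| = _
    have h1 : ((k+1:ℕ):ℤ) - 1 = (k:ℤ) := by push_cast; ring
    rw [h1, Pois_natCast, Pois_natCast]
  have hta : ∀ i : ℕ, a (i + (m+1)) = q (i+m) - q (i+(m+1)) := by
    intro i
    have h1 : i + (m+1) = (i+m) + 1 := by omega
    rw [h1, asucc (i+m)]
    have h2 : s ≤ ((i+m:ℕ):ℝ) + 1 := by
      push_cast
      have : (0:ℝ) ≤ (i:ℝ) := by positivity
      linarith
    have h3 : q ((i+m)+1) ≤ q (i+m) := hmono_dn (i+m) h2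
    rw [abs_of_nonneg (sub_nonneg.mpr h3)]
  have h1s : Summable fun i => q (i + m) := (summable_nat_add_iff m).mpr hqs
  have h2s : Summable fun i => q (i + (m+1)) := (summable_nat_add_iff (m+1)).mpr hqs
  have htails : Summable fun i => a (i + (m+1)) := by
    refine ((h1s.sub h2s).congr fun i => ?_)
    rw [hta i]
  have T : ∑' i : ℕ, a (i + (m+1)) = q m := by
    rw [tsum_congr hta, Summable.tsum_sub h1s h2s]
    have h3 : ∑' i, q (i + m) = q m + ∑' i, q (i + (m+1)) := by
      rw [Summable.tsum_eq_zero_add h1s]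
      congr 1
      · simp
      · exact tsum_congr fun i => by congr 1; omega
    rw [h3]; ring
  have head : ∑ i ∈ Finset.range (m+1), a i = q m := by
    rw [Finset.sum_range_succ']
    have hcongr : ∀ i ∈ Finset.range m, a (i+1) = q (i+1) - q i := by
      intro i hi
      simp only [Finset.mem_range] at hi
      have h2 : ((i:ℝ)) + 1 ≤ s := by
        have : (i:ℝ) + 1 ≤ (m:ℝ) := by exact_mod_cast Nat.succ_le_of_lt hi
        linarith
      rw [asucc i, abs_of_nonpos (sub_nonpos.mpr (hmono_up i h2))]
      ring
    rw [Finset.sum_congr rfl hcongr, Finset.sum_range_sub (f := q), a0]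
    ring
  rw [step0, ← Summable.sum_add_tsum_nat_add' (f := a) (k := m+1) htails, head, T]
  rw [hq]
  ring

end telescope

section analytic

open Stirling in
lemma stirling_lower (n : ℕ) :
    Real.sqrt (2 * π * (n+1:ℕ)) * (((n+1:ℕ):ℝ) / Real.exp 1) ^ (n+1)
      ≤ ((n+1:ℕ).factorial : ℝ) := by
  have h1 : Real.sqrt π ≤ Stirling.stirlingSeq (n + 1) := by
    have ha : Antitone (Stirling.stirlingSeq ∘ Nat.succ) := Stirling.stirlingSeq'_antitone
    have ht : Filter.Tendsto (Stirling.stirlingSeq ∘ Nat.succ) Filter.atTop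
        (nhds (Real.sqrt π)) :=
      Stirling.tendsto_stirlingSeq_sqrt_pi.comp (Filter.tendsto_add_atTop_nat 1)
    exact ha.le_of_tendsto ht n
  rw [Stirling.stirlingSeq] at h1
  have hpos : (0:ℝ) < Real.sqrt (2*(n+1:ℕ)) * (((n+1:ℕ):ℝ)/Real.exp 1)^(n+1) := by
    have : (0:ℝ) < ((n+1:ℕ):ℝ) := by positivity
    positivity
  rw [le_div_iff₀ hpos] at h1
  calc Real.sqrt (2 * π * (n+1:ℕ)) * (((n+1:ℕ):ℝ) / Real.exp 1) ^ (n+1)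
      = Real.sqrt π * (Real.sqrt (2*(n+1:ℕ)) * (((n+1:ℕ):ℝ)/Real.exp 1)^(n+1)) := by
        rw [show 2 * π * ((n+1:ℕ):ℝ) = π * (2*((n+1:ℕ):ℝ)) by ring,
          Real.sqrt_mul pi_nonneg]
        ring
    _ ≤ ((n+1:ℕ).factorial : ℝ) := h1

lemma exp_neg_nat_le (n : ℕ) : Real.exp (-(n:ℝ)) ≤ ((2.7182818283:ℝ)⁻¹)^n := by
  have h1 : Real.exp (-(n:ℝ)) = ((Real.exp 1)⁻¹)^n := by
    rw [← Real.exp_neg, ← Real.exp_nat_mul]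
    congr 1; ring
  rw [h1]
  refine pow_le_pow_left₀ (by positivity) ?_ n
  exact inv_anti₀ (by norm_num) Real.exp_one_gt_d9.le

lemma exp_pow_max {s : ℝ} (hs : 0 < s) (a : ℕ) (ha : 0 < a) :
    s ^ a * Real.exp (-(2*s)) ≤ ((a:ℝ) / 2) ^ a * Real.exp (-(a:ℝ)) := by
  have hA : (0:ℝ) < a := by exact_mod_cast ha
  have h1 : 2*s/a ≤ Real.exp (2*s/a - 1) := by
    have := Real.add_one_le_exp (2*s/a - 1); linarith
  have h2 : (2*s/a)^a ≤ Real.exp (2*s/a - 1)^a := pow_le_pow_left₀ (by positivity) h1 a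
  have h3 : Real.exp (2*s/a - 1)^a = Real.exp (2*s - a) := by
    rw [← Real.exp_nat_mul]
    congr 1
    field_simp
  have h4 : s^a = (2*s/a)^a * ((a:ℝ)/2)^a := by
    rw [← mul_pow]; congr 1; field_simp
  rw [h4]
  have h5 : (2*s/a)^a * ((a:ℝ)/2)^a * Real.exp (-(2*s))
      ≤ Real.exp (2*s - a) * ((a:ℝ)/2)^a * Real.exp (-(2*s)) := by
    have h6 := h2.trans_eq h3
    exact mul_le_mul_of_nonneg_right (mul_le_mul_of_nonneg_right h6 (by positivity))
      (Real.exp_pos _).le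
  refine h5.trans_eq ?_
  have h7 : Real.exp (2*s - a) * Real.exp (-(2*s)) = Real.exp (-(a:ℝ)) := by
    rw [← Real.exp_add]; congr 1; ring
  rw [mul_right_comm, h7]
  ring

lemma case_A3 (m : ℕ) :
    2 * ((m:ℝ) + 1/2) ^ (2*m+1) * Real.exp (-(2*m:ℝ)) ≤ ((m.factorial : ℝ))^2 := by
  rcases lt_or_ge m 4 with hm | hm
  · interval_cases m
    · norm_num
    · have h := exp_neg_nat_le 2
      norm_num at h ⊢
      nlinarith [h]
    · have h := exp_neg_nat_le 4
      norm_num at h ⊢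
      nlinarith [h]
    · have h := exp_neg_nat_le 6
      norm_num [Nat.factorial] at h ⊢
      nlinarith [h, mul_le_mul_of_nonneg_left h (show (0:ℝ) ≤ 823543/64 by norm_num)]
  · -- m ≥ 4, Stirling
    obtain ⟨n, rfl⟩ : ∃ n, m = n + 1 := ⟨m - 1, by omega⟩
    set x : ℝ := ((n+1:ℕ):ℝ) with hx
    have hx1 : (4:ℝ) ≤ x := by rw [hx]; exact_mod_cast hm
    have hx0 : (0:ℝ) < x := by linarith
    have hstir := stirling_lower n
    have hfac0 : (0:ℝ) ≤ Real.sqrt (2 * π * (n+1:ℕ)) * (x / Real.exp 1) ^ (n+1) := by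
      positivity
    have hsq : (Real.sqrt (2 * π * (n+1:ℕ)) * (x / Real.exp 1) ^ (n+1))^2
        ≤ (((n+1:ℕ).factorial : ℝ))^2 := by
      apply pow_le_pow_left₀ hfac0 hstir
    have hsq2 : (Real.sqrt (2 * π * (n+1:ℕ)) * (x / Real.exp 1) ^ (n+1))^2
        = 2 * π * x * (x^(2*(n+1)) * (Real.exp 1 ^ (n+1))⁻¹^2) := by
      rw [mul_pow, Real.sq_sqrt (by positivity), div_pow, two_mul (n+1), pow_add]
      field_simp
      have hn : ((n:ℝ)) = x - 1 := by rw [hx]; push_cast; ring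
      rw [hx]; push_cast
      ring
    -- bound LHS
    have hone : (1 + 1/(2*x)) ^ (2*(n+1)) ≤ Real.exp 1 := by
      have h1 : (1 + 1/(2*x)) ≤ Real.exp (1/(2*x)) := by
        have := Real.add_one_le_exp (1/(2*x))
        linarith
      have h2 : (1 + 1/(2*x)) ^ (2*(n+1)) ≤ Real.exp (1/(2*x)) ^ (2*(n+1)) :=
        pow_le_pow_left₀ (by positivity) h1 _
      refine h2.trans ?_
      rw [← Real.exp_nat_mul]
      have hxeq : ((2*(n+1):ℕ):ℝ) = 2 * x := by rw [hx]; push_cast; ring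
      rw [Real.exp_le_exp]
      rw [hxeq]
      rw [mul_one_div, div_self (by positivity)]
    have hE : Real.exp (-(2*x)) = (Real.exp 1 ^ (2*(n+1)))⁻¹ := by
      rw [← Real.exp_nat_mul, ← Real.exp_neg]
      congr 1
      rw [hx]; push_cast; ring
    have hxsplit : (x + 1/2)^(2*(n+1)) = x^(2*(n+1)) * (1+1/(2*x))^(2*(n+1)) := by
      rw [← mul_pow]; congr 1; field_simp
    have hπ : (3.141592:ℝ) < π := Real.pi_gt_d6
    have he : Real.exp 1 < 2.7182818286 := Real.exp_one_lt_d9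
    have he0 : (0:ℝ) < Real.exp 1 := Real.exp_pos 1
    have hcoef : 2*(x+1/2) * Real.exp 1 ≤ 2*π*x := by nlinarith
    have hXnn : (0:ℝ) ≤ x^(2*(n+1)) * (Real.exp 1 ^ (2*(n+1)))⁻¹ := by positivity
    calc 2 * (x + 1/2) ^ (2*(n+1)+1) * Real.exp (-(2*x))
        = (2*(x+1/2)*(1+1/(2*x))^(2*(n+1)))
            * (x^(2*(n+1)) * (Real.exp 1 ^ (2*(n+1)))⁻¹) := by
          rw [hE, pow_succ, hxsplit]; ring
      _ ≤ (2*(x+1/2) * Real.exp 1) * (x^(2*(n+1)) * (Real.exp 1 ^ (2*(n+1)))⁻¹) := by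
          refine mul_le_mul_of_nonneg_right ?_ hXnn
          have h20 : (0:ℝ) ≤ 2*(x+1/2) := by linarith
          exact mul_le_mul_of_nonneg_left hone h20
      _ ≤ (2*π*x) * (x^(2*(n+1)) * (Real.exp 1 ^ (2*(n+1)))⁻¹) :=
          mul_le_mul_of_nonneg_right hcoef hXnn
      _ = (Real.sqrt (2 * π * (n+1:ℕ)) * (x / Real.exp 1) ^ (n+1))^2 := by
          rw [hsq2]
          have h9 : (Real.exp 1 ^ (n+1))⁻¹^2 = (Real.exp 1 ^ (2*(n+1)))⁻¹ := by
            rw [inv_pow, ← pow_mul, Nat.mul_comm]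
          rw [h9]
      _ ≤ (((n+1:ℕ).factorial : ℝ))^2 := hsq

end analytic

section final

lemma key_ineq {s : ℝ} (hs : 0 < s) :
    2 * (Real.exp (-s) * s ^ (⌊s⌋.toNat) / ((⌊s⌋.toNat).factorial : ℝ))
      ≤ Real.sqrt (2 / (Real.exp 1 * s)) := by
  set m := ⌊s⌋.toNat with hm
  have hfacpos : (0:ℝ) < (m.factorial : ℝ) := by positivity
  have hL0 : 0 ≤ 2 * (Real.exp (-s) * s ^ m / (m.factorial:ℝ)) := by positivity
  rw [Real.le_sqrt hL0 (by positivity)]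
  rw [le_div_iff₀ (by positivity)]
  have hkey : 2 * Real.exp 1 * s^(2*m+1) * Real.exp (-(2*s)) ≤ ((m.factorial:ℝ))^2 := by
    have h1 := exp_pow_max hs (2*m+1) (by omega)
    have h2 := case_A3 m
    calc 2 * Real.exp 1 * s^(2*m+1) * Real.exp (-(2*s))
        = 2 * Real.exp 1 * (s^(2*m+1) * Real.exp (-(2*s))) := by ring
      _ ≤ 2 * Real.exp 1 * ((((2*m+1:ℕ)):ℝ)/2)^(2*m+1) * Real.exp (-((2*m+1:ℕ):ℝ)) := by
          have h1' := mul_le_mul_of_nonneg_left h1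
            (show (0:ℝ) ≤ 2 * Real.exp 1 by positivity)
          linarith [h1']
      _ = 2 * ((m:ℝ)+1/2)^(2*m+1) * Real.exp (-(2*m:ℝ)) := by
          have hb : (((2*m+1:ℕ)):ℝ)/2 = (m:ℝ) + 1/2 := by push_cast; ring
          have hc : Real.exp 1 * Real.exp (-((2*m+1:ℕ):ℝ)) = Real.exp (-(2*m:ℝ)) := by
            rw [← Real.exp_add]; congr 1; push_cast; ring
          rw [hb, ← hc]
          ring
      _ ≤ ((m.factorial:ℝ))^2 := h2
  have hexp2 : Real.exp (-(2*s)) = Real.exp (-s)^2 := by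
    rw [← Real.exp_nat_mul]
    congr 1; push_cast; ring
  have hcalc : (2 * (Real.exp (-s) * s ^ m / (m.factorial:ℝ)))^2 * (Real.exp 1 * s)
      = (2 * Real.exp 1 * s^(2*m+1) * Real.exp (-(2*s))) * (2 / ((m.factorial:ℝ))^2) := by
    rw [hexp2, pow_succ, two_mul, pow_add]
    field_simp
    ring
  rw [hcalc]
  calc (2 * Real.exp 1 * s^(2*m+1) * Real.exp (-(2*s))) * (2 / ((m.factorial:ℝ))^2)
      ≤ ((m.factorial:ℝ))^2 * (2 / ((m.factorial:ℝ))^2) :=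
        mul_le_mul_of_nonneg_right hkey (by positivity)
    _ = 2 := by field_simp

end final

/-- ‖U^j e^{tU}‖ ≤ (2j/(te))^{j/2}. -/
theorem tv_Uj_convExp_le (t : ℝ) (ht : 0 < t) (j : ℕ) (hj : 1 ≤ j) :
    tvNorm (convZ (convPow Umeas j) (convExp (fun n => t * Umeas n)))
      ≤ ((2 * j) / (t * Real.exp 1)) ^ ((j : ℝ) / 2) := by
  have hj0 : (0:ℝ) < (j:ℝ) := by exact_mod_cast hj
  set s : ℝ := t / j with hsdef
  have hs : 0 < s := div_pos ht hj0
  have hAP : Summable fun n => |Pois s n| := summable_abs_Pois hs.le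
  have e1 : convExp (fun n => t * Umeas n) = Pois t := convExp_tU t
  have e2 : convZ (convPow Umeas j) (Pois t) = Dz^[j] (Pois t) :=
    convZ_powU (summable_abs_Pois ht.le) j
  obtain ⟨i, hji⟩ : ∃ i, j = i + 1 := ⟨j - 1, by omega⟩
  have e3 : Pois t = convPow (Pois s) j := by
    rw [hji, convPow_Pois hs.le i]
    congr 1
    have hcast : ((i:ℝ)+1) = (j:ℝ) := by rw [hji]; push_cast; ring
    rw [hcast, hsdef, mul_div_cancel₀ t (ne_of_gt hj0)]
  have e4 : Dz^[j] (convPow (Pois s) j) = convPow (Dz (Pois s)) j :=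
    (convPow_Dz hAP j).symm
  have hDzP : Summable fun n => |Dz (Pois s) n| := summable_abs_Dz hAP
  have step : tvNorm (convZ (convPow Umeas j) (convExp (fun n => t * Umeas n)))
      ≤ (tvNorm (Dz (Pois s)))^j := by
    rw [e1, e2, e3, e4]
    exact tvNorm_convPow_le hDzP j hj
  have bound : tvNorm (Dz (Pois s)) ≤ Real.sqrt (2/(Real.exp 1 * s)) := by
    rw [tvNorm_Dz_Pois hs]
    exact key_ineq hs
  have step2 : (tvNorm (Dz (Pois s)))^j ≤ (Real.sqrt (2/(Real.exp 1 * s)))^j :=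
    pow_le_pow_left₀ (tvNorm_nonneg _) bound j
  have harg : 2/(Real.exp 1 * s) = (2*j)/(t*Real.exp 1) := by
    rw [hsdef]
    rw [div_eq_div_iff (by positivity) (by positivity)]
    field_simp
  have hbase0 : (0:ℝ) ≤ (2*(j:ℝ))/(t*Real.exp 1) := by positivity
  have hrw : (Real.sqrt ((2*(j:ℝ))/(t*Real.exp 1)))^j
      = ((2*(j:ℝ))/(t*Real.exp 1)) ^ ((j:ℝ)/2) := by
    rw [Real.sqrt_eq_rpow, ← Real.rpow_natCast (((2*(j:ℝ))/(t*Real.exp 1)) ^ ((1:ℝ)/2)) j,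
      ← Real.rpow_mul hbase0]
    congr 1
    ring
  calc tvNorm (convZ (convPow Umeas j) (convExp (fun n => t * Umeas n)))
      ≤ (tvNorm (Dz (Pois s)))^j := step
    _ ≤ (Real.sqrt (2/(Real.exp 1 * s)))^j := step2
    _ = ((2*(j:ℝ))/(t*Real.exp 1)) ^ ((j:ℝ)/2) := by rw [harg, hrw]
end

section
/- Let U = δ_1 − δ_0, 0 < p < 1, and n, j positive integers. Then ‖U^j (δ_0 + pU)^n‖ ≤ C(n+j, j)^{-1/2} (p(1-p))^{-j/2}, where C(n+j,j) is the binomial coefficient and (δ_0 + pU)^n is the Binomial(n,p) distribution (as convolution power). -/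
open Real

/-- The Bernoulli(p) distribution `δ_0 + pU` on ℤ. -/
noncomputable def bernoulliZ (p : ℝ) : ℤ → ℝ :=
  fun n => if n = 0 then 1 - p else if n = 1 then p else 0

/-- support predicate -/
def Supp (f : ℤ → ℝ) (a : ℕ) : Prop := ∀ k : ℤ, f k ≠ 0 → 0 ≤ k ∧ k ≤ (a : ℤ)

lemma convZ_eq_sum {f : ℤ → ℝ} {a : ℕ} (hf : Supp f a) (g : ℤ → ℝ) (k : ℤ) :
    convZ f g k = ∑ i ∈ Finset.Icc (0:ℤ) (a:ℤ), f i * g (k - i) := by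
  apply tsum_eq_sum
  intro i hi
  have : f i = 0 := by
    by_contra h
    exact hi (Finset.mem_Icc.2 (hf i h))
  simp [this]

lemma supp_convZ {f g : ℤ → ℝ} {a b : ℕ} (hf : Supp f a) (hg : Supp g b) :
    Supp (convZ f g) (a + b) := by
  intro k hk
  rw [convZ_eq_sum hf] at hk
  obtain ⟨i, hi, hne⟩ := Finset.exists_ne_zero_of_sum_ne_zero hk
  rcases mul_ne_zero_iff.1 hne with ⟨h1, h2⟩
  have H1 := hf i h1
  have H2 := hg _ h2
  push_cast
  omega

lemma sum_Icc_int (F : ℤ → ℝ) (a : ℕ) :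
    ∑ i ∈ Finset.Icc (0:ℤ) (a:ℤ), F i = ∑ u ∈ Finset.range (a+1), F u := by
  rw [show Finset.Icc (0:ℤ) (a:ℤ)
      = (Finset.range (a+1)).map ⟨(Nat.cast : ℕ → ℤ), Nat.cast_injective⟩ by
    ext k
    simp only [Finset.mem_Icc, Finset.mem_map, Finset.mem_range, Function.Embedding.coeFn_mk]
    constructor
    · rintro ⟨h0, h1⟩; exact ⟨k.toNat, by omega, by omega⟩
    · rintro ⟨u, hu, rfl⟩; omega]
  rw [Finset.sum_map]
  rfl

noncomputable def gp (f : ℤ → ℝ) (a : ℕ) : Polynomial ℝ :=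
  ∑ k ∈ Finset.range (a+1), Polynomial.C (f k) * Polynomial.X ^ k

lemma gp_coeff (f : ℤ → ℝ) (a m : ℕ) : (gp f a).coeff m = if m ≤ a then f m else 0 := by
  rw [gp, Polynomial.finset_sum_coeff]
  simp only [Polynomial.coeff_C_mul, Polynomial.coeff_X_pow, mul_ite, mul_one, mul_zero]
  rw [Finset.sum_ite_eq (Finset.range (a+1)) m (fun k => f (k:ℤ))]
  simp [Nat.lt_succ_iff]

lemma gp_mul {f g : ℤ → ℝ} {a b : ℕ} (hf : Supp f a) (hg : Supp g b) :
    gp (convZ f g) (a+b) = gp f a * gp g b := by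
  ext m
  rw [Polynomial.coeff_mul, gp_coeff]
  have hterm : ∀ x ∈ Finset.HasAntidiagonal.antidiagonal m,
      (gp f a).coeff x.1 * (gp g b).coeff x.2 = f x.1 * g x.2 := by
    intro x _
    rw [gp_coeff, gp_coeff]
    by_cases h1 : x.1 ≤ a <;> by_cases h2 : x.2 ≤ b <;> simp [h1, h2]
    · have : g (x.2:ℤ) = 0 := by
        by_contra h; have := hg _ h; omega
      simp [this]
    · have : f (x.1:ℤ) = 0 := by
        by_contra h; have := hf _ h; omega
      simp [this]
    · have : f (x.1:ℤ) = 0 := by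
        by_contra h; have := hf _ h; omega
      simp [this]
  rw [Finset.sum_congr rfl hterm]
  rw [Finset.Nat.sum_antidiagonal_eq_sum_range_succ_mk (fun x => f x.1 * g x.2) m]
  by_cases hm : m ≤ a + b
  · rw [if_pos hm, convZ_eq_sum hf, sum_Icc_int (fun i => f i * g (m - i)) a]
    -- both sides equal sum over range (a+m+1)
    have e1 : ∑ u ∈ Finset.range (a+1), f u * g ((m:ℤ) - u)
        = ∑ u ∈ Finset.range (a+m+1), f u * g ((m:ℤ) - u) := by
      apply Finset.sum_subset
      · intro x hx; simp at hx ⊢; omega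
      · intro x _ hx
        have : f (x:ℤ) = 0 := by
          by_contra h; have := hf _ h; simp at hx; omega
        simp [this]
    have e2 : ∑ u ∈ Finset.range (m+1), f u * g ((m - u : ℕ))
        = ∑ u ∈ Finset.range (a+m+1), f u * g ((m:ℤ) - u) := by
      have step : ∑ u ∈ Finset.range (m+1), f u * g ((m - u : ℕ))
          = ∑ u ∈ Finset.range (m+1), f u * g ((m:ℤ) - u) := by
        apply Finset.sum_congr rfl
        intro u hu
        simp only [Finset.mem_range, Nat.lt_succ_iff] at hu
        congr 2
        omega
      rw [step]
      apply Finset.sum_subset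
      · intro x hx; simp at hx ⊢; omega
      · intro x _ hx
        have : g ((m:ℤ) - x) = 0 := by
          by_contra h; have := hg _ h; simp at hx; omega
        simp [this]
    rw [e1, ← e2]
  · rw [if_neg hm]
    symm
    apply Finset.sum_eq_zero
    intro u hu
    simp only [Finset.mem_range, Nat.lt_succ_iff] at hu
    rw [mul_eq_zero]
    by_cases hua : u ≤ a
    · have : g ((m - u : ℕ)) = 0 := by
        by_contra h; have := hg _ h; omega
      exact Or.inr this
    · have : f (u:ℤ) = 0 := by
        by_contra h; have := hf _ h; omega
      exact Or.inl this
open Polynomial Finset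

lemma supp_U : Supp Umeas 1 := by
  intro k hk
  simp only [Umeas] at hk
  by_cases h1 : k = 1
  · omega
  · by_cases h0 : k = 0 <;> simp [h0, h1] at hk <;> omega

lemma supp_Upow (j : ℕ) : Supp (convPow Umeas j) j := by
  induction j with
  | zero =>
    intro k hk
    simp only [convPow] at hk
    by_cases h : k = 0 <;> simp [h] at hk ⊢
  | succ j ih =>
    have := supp_convZ supp_U ih
    rw [show 1 + j = j + 1 by omega] at this
    exact this

lemma supp_bern (p : ℝ) : Supp (bernoulliZ p) 1 := by
  intro k hk
  simp only [bernoulliZ] at hk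
  by_cases h0 : k = 0
  · omega
  · by_cases h1 : k = 1 <;> simp [h0, h1] at hk <;> omega

lemma supp_bpow (p : ℝ) (n : ℕ) : Supp (convPow (bernoulliZ p) n) n := by
  induction n with
  | zero =>
    intro k hk
    simp only [convPow] at hk
    by_cases h : k = 0 <;> simp [h] at hk ⊢
  | succ n ih =>
    have := supp_convZ (supp_bern p) ih
    rw [show 1 + n = n + 1 by omega] at this
    exact this

lemma gp_U : gp Umeas 1 = X - 1 := by
  rw [gp]
  rw [show Finset.range 2 = {0, 1} by rfl]
  rw [Finset.sum_insert (by decide), Finset.sum_singleton]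
  norm_num [Umeas]
  ring

lemma gp_Upow (j : ℕ) : gp (convPow Umeas j) j = (X - 1) ^ j := by
  induction j with
  | zero =>
    rw [gp]
    simp [convPow]
  | succ j ih =>
    have h := gp_mul supp_U (supp_Upow j)
    rw [show (1 + j) = j + 1 by omega] at h
    rw [show convPow Umeas (j+1) = convZ Umeas (convPow Umeas j) from rfl, h, gp_U, ih]
    ring

lemma gp_bern (p : ℝ) : gp (bernoulliZ p) 1 = C p * X + C (1 - p) := by
  rw [gp]
  rw [show Finset.range 2 = {0, 1} by rfl]
  rw [Finset.sum_insert (by decide), Finset.sum_singleton]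
  norm_num [bernoulliZ]
  ring

lemma gp_bpow (p : ℝ) (n : ℕ) :
    gp (convPow (bernoulliZ p) n) n = (C p * X + C (1 - p)) ^ n := by
  induction n with
  | zero =>
    rw [gp]
    simp [convPow]
  | succ n ih =>
    have h := gp_mul (supp_bern p) (supp_bpow p n)
    rw [show (1 + n) = n + 1 by omega] at h
    rw [show convPow (bernoulliZ p) (n+1) = convZ (bernoulliZ p) (convPow (bernoulliZ p) n) from rfl,
      h, gp_bern, ih]
    ring
variable {ι : Type*} [Fintype ι] [DecidableEq ι]

lemma glem (c d : ι → ℝ) :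
    ∏ i : ι, (C (c i) * X + C (d i))
      = ∑ s ∈ (Finset.univ : Finset ι).powerset,
          C ((∏ i ∈ s, c i) * ∏ i ∈ Finset.univ \ s, d i) * X ^ s.card := by
  rw [Finset.prod_add]
  apply Finset.sum_congr rfl
  intro s _
  rw [Finset.prod_mul_distrib, Finset.prod_const, ← map_prod, ← map_prod, map_mul]
  ring

lemma celem (w : Finset ι → ℝ) (k : ℕ) :
    (∑ s ∈ (Finset.univ : Finset ι).powerset, C (w s) * X ^ s.card).coeff k
      = ∑ s ∈ Finset.powersetCard k (Finset.univ : Finset ι), w s := by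
  rw [Polynomial.finset_sum_coeff]
  simp only [Polynomial.coeff_C_mul, Polynomial.coeff_X_pow, mul_ite, mul_one, mul_zero]
  rw [Finset.powersetCard_eq_filter, Finset.sum_filter]
  apply Finset.sum_congr rfl
  intro s _
  by_cases h : s.card = k
  · simp [h]
  · rw [if_neg h, if_neg (fun hh => h hh.symm)]

lemma prodIte {M : Type*} [CommMonoid M] (J : Finset ι) (P Q : M) :
    (∏ i : ι, if i ∈ J then P else Q) = P ^ J.card * Q ^ (Fintype.card ι - J.card) := by
  rw [Finset.prod_ite, Finset.prod_const, Finset.prod_const]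
  congr 1
  · congr 1
    simp [Finset.filter_mem_eq_inter]
  · congr 1
    rw [show Finset.filter (fun i => ¬ i ∈ J) Finset.univ = Finset.univ \ J by
      ext i; simp]
    rw [Finset.card_univ_diff]

noncomputable def hw (p q : ℝ) {N : ℕ} (A s : Finset (Fin N)) : ℝ :=
  (∏ i ∈ s, (if i ∈ A then p⁻¹ else 1)) * ∏ i ∈ Finset.univ \ s, (if i ∈ A then -q⁻¹ else 1)

section main
variable (p q : ℝ) {N : ℕ}

/-- K1: the generating polynomial of `hw A ·` in `s`. -/
lemma K1 (A : Finset (Fin N)) :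
    ∑ s ∈ (Finset.univ : Finset (Fin N)).powerset, C (hw p q A s) * X ^ s.card
      = (C p⁻¹ * X + C (-q⁻¹)) ^ A.card * (X + 1) ^ (N - A.card) := by
  simp only [hw]
  rw [← glem (fun i => if i ∈ A then p⁻¹ else (1:ℝ)) (fun i => if i ∈ A then -q⁻¹ else (1:ℝ))]
  rw [Finset.prod_congr rfl (fun i _ => by
    by_cases h : i ∈ A <;> simp [h] :
    ∀ i ∈ (Finset.univ : Finset (Fin N)),
      (C (if i ∈ A then p⁻¹ else (1:ℝ)) * X + C (if i ∈ A then -q⁻¹ else (1:ℝ)))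
        = if i ∈ A then (C p⁻¹ * X + C (-q⁻¹)) else (X + 1))]
  rw [prodIte, Fintype.card_fin]

/-- K2: level sums of `hw A ·` only depend on `A.card`. -/
lemma K2 (A : Finset (Fin N)) (k : ℕ) :
    ∑ s ∈ Finset.powersetCard k (Finset.univ : Finset (Fin N)), hw p q A s
      = ((C p⁻¹ * X + C (-q⁻¹)) ^ A.card * (X + 1) ^ (N - A.card)).coeff k := by
  rw [← K1, celem]

/-- K3: swapped representation of hw. -/
lemma K3 (A s : Finset (Fin N)) :
    hw p q A s = (∏ i ∈ A, (if i ∈ s then p⁻¹ else -q⁻¹)) *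
      ∏ i ∈ Finset.univ \ A, (1:ℝ) := by
  rw [hw, Finset.prod_const_one, mul_one]
  rw [Finset.prod_ite_mem s A (fun _ => p⁻¹),
    Finset.prod_ite_mem (Finset.univ \ s) A (fun _ => -q⁻¹)]
  rw [Finset.prod_ite (fun _ => p⁻¹) (fun _ => -q⁻¹)]
  congr 1
  · rw [Finset.inter_comm, Finset.filter_mem_eq_inter]
  · congr 1
    ext i
    simp only [Finset.mem_inter, Finset.mem_sdiff, Finset.mem_univ, true_and,
      Finset.mem_filter]
    tauto

/-- K4: generating polynomial in `A` at fixed `s`. -/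
lemma K4 (s : Finset (Fin N)) :
    ∑ A ∈ (Finset.univ : Finset (Fin N)).powerset, C (hw p q A s) * X ^ A.card
      = (C p⁻¹ * X + 1) ^ s.card * (C (-q⁻¹) * X + 1) ^ (N - s.card) := by
  rw [Finset.sum_congr rfl (fun A _ => by rw [K3] :
    ∀ A ∈ (Finset.univ : Finset (Fin N)).powerset,
      C (hw p q A s) * X ^ A.card
        = C ((∏ i ∈ A, (if i ∈ s then p⁻¹ else -q⁻¹)) * ∏ i ∈ Finset.univ \ A, (1:ℝ))
            * X ^ A.card)]
  rw [← glem (fun i => if i ∈ s then p⁻¹ else (-q⁻¹)) (fun _ => (1:ℝ))]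
  rw [Finset.prod_congr rfl (fun i _ => by
    by_cases h : i ∈ s <;> simp [h] :
    ∀ i ∈ (Finset.univ : Finset (Fin N)),
      (C (if i ∈ s then p⁻¹ else (-q⁻¹)) * X + C (1:ℝ))
        = if i ∈ s then (C p⁻¹ * X + 1) else (C (-q⁻¹) * X + 1))]
  rw [prodIte, Fintype.card_fin]

/-- K4': level sums over `A`. -/
lemma K4' (s : Finset (Fin N)) (j : ℕ) :
    ∑ A ∈ Finset.powersetCard j (Finset.univ : Finset (Fin N)), hw p q A s
      = ((C p⁻¹ * X + 1) ^ s.card * (C (-q⁻¹) * X + 1) ^ (N - s.card)).coeff j := by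
  rw [← K4, celem]

/-- K5: double counting. -/
lemma K5 (j k : ℕ) :
    (N.choose j : ℝ) * ((C p⁻¹ * X + C (-q⁻¹)) ^ j * (X + 1) ^ (N - j)).coeff k
      = (N.choose k : ℝ) * ((C p⁻¹ * X + 1) ^ k * (C (-q⁻¹) * X + 1) ^ (N - k)).coeff j := by
  have calc1 : ∑ A ∈ Finset.powersetCard j (Finset.univ : Finset (Fin N)),
      ∑ s ∈ Finset.powersetCard k (Finset.univ : Finset (Fin N)), hw p q A s
      = (N.choose j : ℝ) * ((C p⁻¹ * X + C (-q⁻¹)) ^ j * (X + 1) ^ (N - j)).coeff k := by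
    have step : ∀ A ∈ Finset.powersetCard j (Finset.univ : Finset (Fin N)),
        ∑ s ∈ Finset.powersetCard k (Finset.univ : Finset (Fin N)), hw p q A s
          = ((C p⁻¹ * X + C (-q⁻¹)) ^ j * (X + 1) ^ (N - j)).coeff k := by
      intro A hA
      rw [K2, (Finset.mem_powersetCard.1 hA).2]
    rw [Finset.sum_congr rfl step, Finset.sum_const, Finset.card_powersetCard,
      Finset.card_univ, Fintype.card_fin, nsmul_eq_mul]
  have calc2 : ∑ A ∈ Finset.powersetCard j (Finset.univ : Finset (Fin N)),
      ∑ s ∈ Finset.powersetCard k (Finset.univ : Finset (Fin N)), hw p q A s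
      = (N.choose k : ℝ) * ((C p⁻¹ * X + 1) ^ k * (C (-q⁻¹) * X + 1) ^ (N - k)).coeff j := by
    rw [Finset.sum_comm]
    have step : ∀ s ∈ Finset.powersetCard k (Finset.univ : Finset (Fin N)),
        ∑ A ∈ Finset.powersetCard j (Finset.univ : Finset (Fin N)), hw p q A s
          = ((C p⁻¹ * X + 1) ^ k * (C (-q⁻¹) * X + 1) ^ (N - k)).coeff j := by
      intro s hs
      rw [K4', (Finset.mem_powersetCard.1 hs).2]
    rw [Finset.sum_congr rfl step, Finset.sum_const, Finset.card_powersetCard,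
      Finset.card_univ, Fintype.card_fin, nsmul_eq_mul]
  rw [← calc1, calc2]

/-- K6: orthogonality. -/
lemma K6 (hp : p ≠ 0) (hq : q ≠ 0) (hpq : p + q = 1) (J A : Finset (Fin N))
    (hJ : J.card = A.card) :
    ∑ s ∈ (Finset.univ : Finset (Fin N)).powerset,
        p ^ s.card * q ^ (N - s.card) * (hw p q J s * hw p q A s)
      = if A = J then (p⁻¹ + q⁻¹) ^ J.card else 0 := by
  have key : ∀ s ∈ (Finset.univ : Finset (Fin N)).powerset,
      p ^ s.card * q ^ (N - s.card) * (hw p q J s * hw p q A s)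
      = (∏ i ∈ s, (p * ((if i ∈ J then p⁻¹ else 1) * (if i ∈ A then p⁻¹ else 1)))) *
        ∏ i ∈ Finset.univ \ s,
          (q * ((if i ∈ J then -q⁻¹ else 1) * (if i ∈ A then -q⁻¹ else 1))) := by
    intro s _
    rw [Finset.prod_mul_distrib, Finset.prod_mul_distrib, Finset.prod_mul_distrib,
      Finset.prod_mul_distrib, Finset.prod_const, Finset.prod_const, hw, hw,
      Finset.card_univ_diff, Fintype.card_fin]
    ring
  rw [Finset.sum_congr rfl key, ← Finset.prod_add]
  have factor : ∀ i : Fin N,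
      (p * ((if i ∈ J then p⁻¹ else 1) * (if i ∈ A then p⁻¹ else 1))) +
      (q * ((if i ∈ J then -q⁻¹ else 1) * (if i ∈ A then -q⁻¹ else 1)))
      = if i ∈ J then (if i ∈ A then p⁻¹ + q⁻¹ else 0)
        else (if i ∈ A then 0 else 1) := by
    intro i
    by_cases h1 : i ∈ J <;> by_cases h2 : i ∈ A <;>
        simp only [h1, h2, if_true, if_false, mul_one, one_mul] <;>
      first
        | (rw [← mul_assoc, mul_inv_cancel₀ hp, one_mul, neg_mul_neg, ← mul_assoc,
            mul_inv_cancel₀ hq, one_mul])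
        | (rw [mul_inv_cancel₀ hp, mul_neg, mul_inv_cancel₀ hq]; ring)
        | linarith
  rw [Finset.prod_congr rfl (fun i _ => factor i)]
  by_cases hAJ : A = J
  · subst hAJ
    rw [if_pos rfl]
    rw [Finset.prod_congr rfl (fun i _ => by
      by_cases h : i ∈ A <;> simp [h] :
      ∀ i ∈ (Finset.univ : Finset (Fin N)),
        (if i ∈ A then (if i ∈ A then p⁻¹ + q⁻¹ else 0) else (if i ∈ A then 0 else 1))
          = if i ∈ A then p⁻¹ + q⁻¹ else 1)]
    rw [Finset.prod_ite_mem, Finset.univ_inter, Finset.prod_const]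
  · rw [if_neg hAJ]
    have hne : (J \ A).Nonempty := by
      rw [Finset.sdiff_nonempty]
      intro hsub
      exact hAJ (Finset.eq_of_subset_of_card_le hsub hJ.ge).symm
    obtain ⟨i, hi⟩ := hne
    rw [Finset.mem_sdiff] at hi
    apply Finset.prod_eq_zero (Finset.mem_univ i)
    simp [hi.1, hi.2]

/-- K0: the generating polynomial of the weighted measure. -/
lemma K0 (hp : p ≠ 0) (hq : q ≠ 0) (J : Finset (Fin N)) :
    ∑ s ∈ (Finset.univ : Finset (Fin N)).powerset,
        C (p ^ s.card * q ^ (N - s.card) * hw p q J s) * X ^ s.card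
      = (X - 1) ^ J.card * (C p * X + C q) ^ (N - J.card) := by
  have key : ∀ s ∈ (Finset.univ : Finset (Fin N)).powerset,
      C (p ^ s.card * q ^ (N - s.card) * hw p q J s) * X ^ s.card
      = C ((∏ i ∈ s, (p * (if i ∈ J then p⁻¹ else 1))) *
          ∏ i ∈ Finset.univ \ s, (q * (if i ∈ J then -q⁻¹ else 1))) * X ^ s.card := by
    intro s _
    congr 1
    rw [Finset.prod_mul_distrib, Finset.prod_mul_distrib, Finset.prod_const,
      Finset.prod_const, hw, Finset.card_univ_diff, Fintype.card_fin]
    ring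
  rw [Finset.sum_congr rfl key]
  rw [← glem (fun i => p * (if i ∈ J then p⁻¹ else 1)) (fun i => q * (if i ∈ J then -q⁻¹ else 1))]
  rw [Finset.prod_congr rfl (fun i _ => by
    by_cases h : i ∈ J
    · simp only [h, if_true, mul_inv_cancel₀ hp, map_one, one_mul, mul_neg,
        mul_inv_cancel₀ hq, map_neg]
      ring
    · simp only [h, if_false, mul_one] :
    ∀ i ∈ (Finset.univ : Finset (Fin N)),
      (C (p * (if i ∈ J then p⁻¹ else 1)) * X + C (q * (if i ∈ J then -q⁻¹ else 1)))
        = if i ∈ J then (X - 1) else (C p * X + C q))]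
  rw [prodIte, Fintype.card_fin]

/-- K0'': coefficient form. -/
lemma K0'' (hp : p ≠ 0) (hq : q ≠ 0) (J : Finset (Fin N)) (k : ℕ) :
    ((X - 1) ^ J.card * (C p * X + C q) ^ (N - J.card)).coeff k
      = p ^ k * q ^ (N - k) *
        ((C p⁻¹ * X + C (-q⁻¹)) ^ J.card * (X + 1) ^ (N - J.card)).coeff k := by
  rw [← K0 p q hp hq J, celem, ← K2]
  rw [Finset.mul_sum]
  apply Finset.sum_congr rfl
  intro s hs
  rw [(Finset.mem_powersetCard.1 hs).2]

lemma auxdiv (a b c cj ck : ℝ) (h : cj * b = ck * c) (hck : ck ≠ 0) (hcj : cj ≠ 0) :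
    a * b ^ 2 / ck = a * (b * c) / cj := by
  rw [div_eq_div_iff hck hcj]
  calc a * b ^ 2 * cj = a * b * (cj * b) := by ring
    _ = a * b * (ck * c) := by rw [h]
    _ = a * (b * c) * ck := by ring

/-- The T identity. -/
lemma Tident (hp : p ≠ 0) (hq : q ≠ 0) (hpq : p + q = 1) (jj : ℕ) (hjjN : jj ≤ N) :
    ∑ k ∈ Finset.range (N + 1),
        p ^ k * q ^ (N - k) *
          (((C p⁻¹ * X + C (-q⁻¹)) ^ jj * (X + 1) ^ (N - jj)).coeff k) ^ 2
            / (N.choose k : ℝ)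
      = (p⁻¹ + q⁻¹) ^ jj / (N.choose jj : ℝ) := by
  obtain ⟨J, -, hJ⟩ := Finset.exists_subset_card_eq (s := (Finset.univ : Finset (Fin N))) (n := jj)
    (by rw [Finset.card_univ, Fintype.card_fin]; exact hjjN)
  set Hc : ℕ → ℝ := fun k => ((C p⁻¹ * X + C (-q⁻¹)) ^ jj * (X + 1) ^ (N - jj)).coeff k with hHc
  set Lc : ℕ → ℝ := fun k => ((C p⁻¹ * X + 1) ^ k * (C (-q⁻¹) * X + 1) ^ (N - k)).coeff jj with hLc
  have hCjj : ((N.choose jj : ℝ)) ≠ 0 := by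
    exact_mod_cast (Nat.choose_pos hjjN).ne'
  have step1 : ∀ k ∈ Finset.range (N + 1),
      p ^ k * q ^ (N - k) * (Hc k) ^ 2 / (N.choose k : ℝ)
        = p ^ k * q ^ (N - k) * (Hc k * Lc k) / (N.choose jj : ℝ) := by
    intro k hk
    simp only [Finset.mem_range, Nat.lt_succ_iff] at hk
    have hCk : ((N.choose k : ℝ)) ≠ 0 := by
      exact_mod_cast (Nat.choose_pos hk).ne'
    exact auxdiv _ _ _ _ _ (K5 p q (N := N) jj k) hCk hCjj
  rw [Finset.sum_congr rfl step1]
  have step3 : ∀ k ∈ Finset.range (N + 1),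
      p ^ k * q ^ (N - k) * (Hc k * Lc k)
        = ∑ s ∈ Finset.powersetCard k (Finset.univ : Finset (Fin N)),
            p ^ s.card * q ^ (N - s.card) * hw p q J s * Lc s.card := by
    intro k _
    have h2 : Hc k = ∑ s ∈ Finset.powersetCard k (Finset.univ : Finset (Fin N)), hw p q J s := by
      rw [K2, hJ, hHc]
    rw [h2, Finset.sum_mul, Finset.mul_sum]
    apply Finset.sum_congr rfl
    intro s hs
    rw [(Finset.mem_powersetCard.1 hs).2]
    ring
  have hdivsum : ∑ k ∈ Finset.range (N + 1),
      p ^ k * q ^ (N - k) * (Hc k * Lc k) / (N.choose jj : ℝ)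
      = (∑ k ∈ Finset.range (N + 1), p ^ k * q ^ (N - k) * (Hc k * Lc k)) / (N.choose jj : ℝ) := by
    rw [Finset.sum_div]
  rw [hdivsum, Finset.sum_congr rfl step3]
  have collapse : ∑ k ∈ Finset.range (N + 1),
      ∑ s ∈ Finset.powersetCard k (Finset.univ : Finset (Fin N)),
        p ^ s.card * q ^ (N - s.card) * hw p q J s * Lc s.card
      = ∑ s ∈ (Finset.univ : Finset (Fin N)).powerset,
          p ^ s.card * q ^ (N - s.card) * hw p q J s * Lc s.card := by
    rw [Finset.sum_powerset]
    rw [Finset.card_univ, Fintype.card_fin]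
  rw [collapse]
  have step5 : ∀ s ∈ (Finset.univ : Finset (Fin N)).powerset,
      p ^ s.card * q ^ (N - s.card) * hw p q J s * Lc s.card
        = ∑ A ∈ Finset.powersetCard jj (Finset.univ : Finset (Fin N)),
            p ^ s.card * q ^ (N - s.card) * (hw p q J s * hw p q A s) := by
    intro s _
    have h4 : Lc s.card = ∑ A ∈ Finset.powersetCard jj (Finset.univ : Finset (Fin N)),
        hw p q A s := by
      rw [K4', hLc]
    rw [h4, Finset.mul_sum]
    apply Finset.sum_congr rfl
    intro A _
    ring
  rw [Finset.sum_congr rfl step5, Finset.sum_comm]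
  have step6 : ∀ A ∈ Finset.powersetCard jj (Finset.univ : Finset (Fin N)),
      ∑ s ∈ (Finset.univ : Finset (Fin N)).powerset,
        p ^ s.card * q ^ (N - s.card) * (hw p q J s * hw p q A s)
      = if A = J then (p⁻¹ + q⁻¹) ^ jj else 0 := by
    intro A hA
    rw [K6 p q hp hq hpq J A (by rw [hJ, (Finset.mem_powersetCard.1 hA).2]), hJ]
  rw [Finset.sum_congr rfl step6]
  rw [Finset.sum_ite_eq' (Finset.powersetCard jj (Finset.univ : Finset (Fin N))) J
    (fun _ => (p⁻¹ + q⁻¹) ^ jj)]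
  rw [if_pos (Finset.mem_powersetCard.2 ⟨Finset.subset_univ J, hJ⟩)]

end main

lemma finalnum (x Cr : ℝ) (hx : 0 < x) (hC : 0 < Cr) (j : ℕ) :
    Real.sqrt ((x⁻¹) ^ j / Cr) = Cr ^ (-(1:ℝ)/2) * x ^ (-(j:ℝ)/2) := by
  have h1 : Cr ^ (-(1:ℝ)/2) = (Real.sqrt Cr)⁻¹ := by
    rw [neg_div, Real.rpow_neg hC.le, Real.sqrt_eq_rpow]
  have h2 : x ^ (-(j:ℝ)/2) = (Real.sqrt (x ^ j))⁻¹ := by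
    rw [neg_div, Real.rpow_neg hx.le]
    congr 1
    rw [show (j:ℝ)/2 = (j:ℝ) * (1/2) by ring, Real.rpow_mul hx.le, Real.rpow_natCast,
      Real.sqrt_eq_rpow]
  rw [Real.sqrt_div (by positivity) Cr, inv_pow, Real.sqrt_inv, h1, h2, div_eq_mul_inv]
  ring

/-- ‖U^j (δ_0 + pU)^n‖ ≤ C(n+j,j)^{-1/2} (p(1-p))^{-j/2}. -/
theorem tv_Uj_binomial_le (p : ℝ) (hp : 0 < p) (hp1 : p < 1) (n j : ℕ)
    (hn : 1 ≤ n) (hj : 1 ≤ j) :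
    tvNorm (convZ (convPow Umeas j) (convPow (bernoulliZ p) n))
      ≤ (((n + j).choose j : ℝ)) ^ (-(1 : ℝ) / 2) * (p * (1 - p)) ^ (-(j : ℝ) / 2) := by
  set q := 1 - p with hqdef
  have hq : 0 < q := by simp [hqdef]; linarith
  have hpq : p + q = 1 := by rw [hqdef]; ring
  set N := n + j with hNdef
  set fc := convZ (convPow Umeas j) (convPow (bernoulliZ p) n) with hfcdef
  have hsupp : Supp fc N := by
    have h := supp_convZ (supp_Upow j) (supp_bpow p n)
    rwa [show j + n = N by omega] at h
  have hgp : gp fc N = (X - 1) ^ j * (C p * X + C q) ^ n := by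
    have h := gp_mul (supp_Upow j) (supp_bpow p n)
    rw [gp_Upow, gp_bpow] at h
    rw [show N = j + n by omega]
    exact h
  obtain ⟨J, -, hJ⟩ := Finset.exists_subset_card_eq (s := (Finset.univ : Finset (Fin N))) (n := j)
    (by rw [Finset.card_univ, Fintype.card_fin]; omega)
  have hfck : ∀ k : ℕ, k ≤ N → fc (k : ℤ) = p ^ k * q ^ (N - k) *
      ((C p⁻¹ * X + C (-q⁻¹)) ^ j * (X + 1) ^ (N - j)).coeff k := by
    intro k hk
    have h1 : fc (k : ℤ) = (gp fc N).coeff k := by rw [gp_coeff, if_pos hk]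
    rw [h1, hgp]
    have h2 := K0'' p q hp.ne' hq.ne' J k
    rw [hJ] at h2
    rw [show n = N - j by omega]
    exact h2
  set Hc : ℕ → ℝ := fun k =>
    ((C p⁻¹ * X + C (-q⁻¹)) ^ j * (X + 1) ^ (N - j)).coeff k with hHcdef
  set w : ℕ → ℝ := fun k => (N.choose k : ℝ) * (p ^ k * q ^ (N - k)) with hwdef
  have hwpos : ∀ k ∈ Finset.range (N + 1), 0 < w k := by
    intro k hk
    simp only [Finset.mem_range, Nat.lt_succ_iff] at hk
    have := Nat.choose_pos hk
    rw [hwdef]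
    positivity
  have hwsum : ∑ k ∈ Finset.range (N + 1), w k = 1 := by
    have h := add_pow p q N
    rw [hpq, one_pow] at h
    calc ∑ k ∈ Finset.range (N + 1), w k
        = ∑ m ∈ Finset.range (N + 1), p ^ m * q ^ (N - m) * (N.choose m : ℝ) := by
          apply Finset.sum_congr rfl
          intro k _
          simp only [hwdef]
          ring
      _ = 1 := h.symm
  have htv : tvNorm fc = ∑ k ∈ Finset.range (N + 1), |fc (k : ℤ)| := by
    rw [tvNorm, tsum_eq_sum (s := Finset.Icc (0:ℤ) (N:ℤ)) (by
      intro b hb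
      have hb0 : fc b = 0 := by
        by_contra h
        exact hb (Finset.mem_Icc.2 (hsupp b h))
      rw [hb0, abs_zero])]
    exact sum_Icc_int (fun i => |fc i|) N
  have hT : ∑ k ∈ Finset.range (N + 1), (fc (k : ℤ)) ^ 2 / w k
      = ((p * q)⁻¹) ^ j / (N.choose j : ℝ) := by
    have hTid := Tident p q (N := N) hp.ne' hq.ne' hpq j (by omega)
    have hterm : ∀ k ∈ Finset.range (N + 1),
        (fc (k : ℤ)) ^ 2 / w k = p ^ k * q ^ (N - k) * (Hc k) ^ 2 / (N.choose k : ℝ) := by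
      intro k hk
      simp only [Finset.mem_range, Nat.lt_succ_iff] at hk
      rw [hfck k hk, hwdef, hHcdef]
      have hC : ((N.choose k : ℝ)) ≠ 0 := by exact_mod_cast (Nat.choose_pos hk).ne'
      have hpk : p ^ k ≠ 0 := pow_ne_zero _ hp.ne'
      have hqk : q ^ (N - k) ≠ 0 := pow_ne_zero _ hq.ne'
      field_simp
    rw [Finset.sum_congr rfl hterm]
    have hinv : p⁻¹ + q⁻¹ = (p * q)⁻¹ := by
      field_simp
      linarith
    rw [← hinv]
    exact hTid
  have habs : ∀ k ∈ Finset.range (N + 1),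
      |fc (k : ℤ)| = |fc (k : ℤ)| / Real.sqrt (w k) * Real.sqrt (w k) := by
    intro k hk
    exact (div_mul_cancel₀ _ (Real.sqrt_ne_zero'.2 (hwpos k hk))).symm
  have hcs : (∑ k ∈ Finset.range (N + 1), |fc (k : ℤ)|) ^ 2
      ≤ ∑ k ∈ Finset.range (N + 1), (fc (k : ℤ)) ^ 2 / w k := by
    have h := Finset.sum_mul_sq_le_sq_mul_sq (Finset.range (N + 1))
      (fun k => |fc (k : ℤ)| / Real.sqrt (w k)) (fun k => Real.sqrt (w k))
    rw [Finset.sum_congr rfl (fun k hk => (habs k hk).symm)] at h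
    have e2 : ∀ k ∈ Finset.range (N + 1),
        (|fc (k : ℤ)| / Real.sqrt (w k)) ^ 2 = (fc (k : ℤ)) ^ 2 / w k := by
      intro k hk
      rw [div_pow, Real.sq_sqrt (hwpos k hk).le, sq_abs]
    have e3 : ∀ k ∈ Finset.range (N + 1), (Real.sqrt (w k)) ^ 2 = w k := by
      intro k hk
      exact Real.sq_sqrt (hwpos k hk).le
    rw [Finset.sum_congr rfl e2, Finset.sum_congr rfl e3, hwsum, mul_one] at h
    exact h
  have hfinal : tvNorm fc ≤ Real.sqrt (((p * q)⁻¹) ^ j / (N.choose j : ℝ)) := by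
    rw [htv, ← Real.sqrt_sq (Finset.sum_nonneg (fun k _ => abs_nonneg _))]
    apply Real.sqrt_le_sqrt
    rw [← hT]
    exact hcs
  have hChoosePos : (0:ℝ) < (N.choose j : ℝ) := by
    exact_mod_cast Nat.choose_pos (by omega : j ≤ N)
  calc tvNorm fc ≤ Real.sqrt (((p * q)⁻¹) ^ j / (N.choose j : ℝ)) := hfinal
    _ = ((N.choose j : ℝ)) ^ (-(1:ℝ)/2) * (p * q) ^ (-(j:ℝ)/2) :=
        finalnum (p * q) (N.choose j : ℝ) (by positivity) hChoosePos j
end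

section
/- Let X_1, X_2 be indicator random variables obtained by grouping m consecutive (k_1,k_2)-event indicators as in the construction of N(n;k_1,k_2), so that X_1, X_2 are Bernoulli(m·a(p)) and the product X_1 X_2 counts overlapping occurrence pairs. Then E[X_1 X_2] = a(p)² m(m+1)/2 and hence Ê(X_1, X_2) = E[X_1 X_2] − E X_1 · E X_2 = −a(p)² m(m−1)/2. -/
open MeasureTheory ProbabilityTheory


lemma prod01 {ι : Type*} (S : Finset ι) (f : ι → ℝ) (h : ∀ t ∈ S, f t = 0 ∨ f t = 1) :
    (∏ t ∈ S, f t) = 0 ∨ (∏ t ∈ S, f t) = 1 := by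
  classical
  by_cases hz : ∃ t ∈ S, f t = 0
  · obtain ⟨t, ht, h0⟩ := hz
    exact Or.inl (Finset.prod_eq_zero ht h0)
  · push_neg at hz
    exact Or.inr (Finset.prod_eq_one fun t ht => (h t ht).resolve_left (hz t ht))

lemma int_eta {Ω : Type*} [MeasurableSpace Ω] (μ : Measure Ω) [IsProbabilityMeasure μ]
    (p : ℝ) (hp : 0 ≤ p) (f : Ω → ℝ) (hmeas : Measurable f)
    (h01 : ∀ ω, f ω = 0 ∨ f ω = 1) (hber : μ {ω | f ω = 1} = ENNReal.ofReal p) :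
    Integrable f μ ∧ ∫ ω, f ω ∂μ = p := by
  have hs : MeasurableSet {ω | f ω = 1} := hmeas (measurableSet_singleton 1)
  have feq : f = Set.indicator {ω | f ω = 1} (fun _ => (1 : ℝ)) := by
    funext ω
    rcases h01 ω with h0 | h1
    · rw [Set.indicator_of_notMem, h0]
      simp only [Set.mem_setOf_eq, h0]
      norm_num
    · rw [Set.indicator_of_mem, h1]
      simpa using h1
  constructor
  · rw [feq]; exact (integrable_const 1).indicator hs
  · rw [feq, integral_indicator_const 1 hs, measureReal_def, hber, ENNReal.toReal_ofReal hp, smul_eq_mul, mul_one]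

lemma int_prod {Ω : Type*} [MeasurableSpace Ω] (μ : Measure Ω) [IsProbabilityMeasure μ]
    (η : ℕ → Ω → ℝ) (hmeas : ∀ i, Measurable (η i))
    (hind : iIndepFun η μ)
    (F : ℕ → ℝ → ℝ) (hF : ∀ t, Measurable (F t)) (S : Finset ℕ) :
    ∫ ω, ∏ t ∈ S, F t (η t ω) ∂μ = ∏ t ∈ S, ∫ ω, F t (η t ω) ∂μ := by
  classical
  set g : ℕ → Ω → ℝ := fun t ω => F t (η t ω) with hg
  have hgmeas : ∀ t, Measurable (g t) := fun t => (hF t).comp (hmeas t)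
  have hgind : iIndepFun g μ := hind.comp _ hF
  induction S using Finset.induction with
  | empty => simp
  | @insert a s ha ih =>
    have hpm : Measurable (∏ t ∈ s, g t) := by
      have : (∏ t ∈ s, g t) = fun ω => ∏ t ∈ s, g t ω := by
        funext ω; simp
      rw [this]
      exact Finset.measurable_prod _ fun t _ => hgmeas t
    have hIndep : IndepFun (g a) (∏ t ∈ s, g t) μ :=
      (hgind.indepFun_finset_prod_of_notMem hgmeas ha).symm
    have h2 := hIndep.integral_mul_eq_mul_integral (hgmeas a).aestronglyMeasurable hpm.aestronglyMeasurable
    have h1 : ∫ ω, ∏ t ∈ insert a s, g t ω ∂μ = ∫ ω, (g a * ∏ t ∈ s, g t) ω ∂μ := by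
      congr 1; funext ω; simp [Finset.prod_insert ha]
    rw [Finset.prod_insert ha, h1]
    rw [show (∫ ω, (g a * ∏ t ∈ s, g t) ω ∂μ) = ∫ ω, (g a * ∏ t ∈ s, g t) ω ∂μ from rfl]
    have : (∫ ω, (g a * ∏ t ∈ s, g t) ω ∂μ) = (∫ ω, g a ω ∂μ) * ∫ ω, (∏ t ∈ s, g t) ω ∂μ := h2
    rw [this, ← ih]
    congr 1
    · congr 1; funext ω; simp [hg]

-- Gauss-type counting lemma
lemma gauss_aux (m : ℕ) (hm : 1 ≤ m) :
    (∑ i ∈ Finset.Icc m (2*m-1), (2*m - i)) * 2 = m * (m+1) := by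
  have h1 : ∑ i ∈ Finset.Icc m (2*m-1), (2*m - i) = ∑ d ∈ Finset.Icc 1 m, d := by
    refine Finset.sum_bij' (fun a _ => 2*m - a) (fun d _ => 2*m - d) ?_ ?_ ?_ ?_ ?_ <;>
      intro a ha <;> simp [Finset.mem_Icc] at ha ⊢ <;> omega
  have h2 : Finset.range (m+1) = insert 0 (Finset.Icc 1 m) := by
    ext t; simp [Finset.mem_Icc, Finset.mem_range]; omega
  have h3 := Finset.sum_range_id_mul_two (m+1)
  rw [h2, Finset.sum_insert (by simp)] at h3
  simp only [Nat.add_sub_cancel, zero_add] at h3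
  rw [h1, h3, Nat.mul_comm]

-- product of constants over the split interval
lemma prod_const_split (p : ℝ) (k₁ k₂ j : ℕ) (hj : k₁ + k₂ ≤ j)
    (C : ℕ → Prop) [DecidablePred C]
    (hC1 : ∀ t ∈ Finset.Icc (j - (k₁ + k₂) + 1) (j - k₂), C t)
    (hC2 : ∀ t ∈ Finset.Icc (j - k₂ + 1) j, ¬ C t) :
    ∏ t ∈ Finset.Icc (j - (k₁ + k₂) + 1) j, (if C t then 1 - p else p)
      = (1 - p) ^ k₁ * p ^ k₂ := by
  have hU : Finset.Icc (j - (k₁ + k₂) + 1) (j - k₂) ∪ Finset.Icc (j - k₂ + 1) j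
      = Finset.Icc (j - (k₁ + k₂) + 1) j := by
    ext t; simp only [Finset.mem_union, Finset.mem_Icc]; omega
  have hD : Disjoint (Finset.Icc (j - (k₁ + k₂) + 1) (j - k₂)) (Finset.Icc (j - k₂ + 1) j) := by
    simp only [Finset.disjoint_left, Finset.mem_Icc]; omega
  rw [← hU, Finset.prod_union hD]
  rw [Finset.prod_congr rfl (fun t ht => if_pos (hC1 t ht)),
      Finset.prod_congr rfl (fun t ht => if_neg (hC2 t ht)),
      Finset.prod_const, Finset.prod_const]
  have c1 : (Finset.Icc (j - (k₁ + k₂) + 1) (j - k₂)).card = k₁ := by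
    simp [Nat.card_Icc]; omega
  have c2 : (Finset.Icc (j - k₂ + 1) j).card = k₂ := by
    simp [Nat.card_Icc]; omega
  rw [c1, c2]

-- split of the Y product as a single ite-product
lemma Y_as_prod {Ω : Type*} (η : ℕ → Ω → ℝ) (k₁ k₂ j : ℕ) (hj : k₁ + k₂ ≤ j)
    (C : ℕ → Prop) [DecidablePred C]
    (hC1 : ∀ t ∈ Finset.Icc (j - (k₁ + k₂) + 1) (j - k₂), C t)
    (hC2 : ∀ t ∈ Finset.Icc (j - k₂ + 1) j, ¬ C t) (ω : Ω) :
    (∏ i ∈ Finset.Icc (j - (k₁ + k₂) + 1) (j - k₂), (1 - η i ω)) *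
        ∏ i ∈ Finset.Icc (j - k₂ + 1) j, η i ω
      = ∏ t ∈ Finset.Icc (j - (k₁ + k₂) + 1) j, (if C t then 1 - η t ω else η t ω) := by
  have hU : Finset.Icc (j - (k₁ + k₂) + 1) (j - k₂) ∪ Finset.Icc (j - k₂ + 1) j
      = Finset.Icc (j - (k₁ + k₂) + 1) j := by
    ext t; simp only [Finset.mem_union, Finset.mem_Icc]; omega
  have hD : Disjoint (Finset.Icc (j - (k₁ + k₂) + 1) (j - k₂)) (Finset.Icc (j - k₂ + 1) j) := by
    simp only [Finset.disjoint_left, Finset.mem_Icc]; omega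
  rw [← hU, Finset.prod_union hD]
  rw [Finset.prod_congr rfl (fun t ht => if_pos (hC1 t ht)),
      Finset.prod_congr rfl (fun t ht => if_neg (hC2 t ht))]

lemma integrable_of01 {Ω : Type*} [MeasurableSpace Ω] (μ : Measure Ω) [IsProbabilityMeasure μ]
    (f : Ω → ℝ) (hm : AEStronglyMeasurable f μ) (h : ∀ ω, f ω = 0 ∨ f ω = 1) :
    Integrable f μ :=
  (integrable_const 1).mono' hm (Filter.Eventually.of_forall fun ω => by
    rcases h ω with h | h <;> simp [h])

lemma int_prod_ite {Ω : Type*} [MeasurableSpace Ω] (μ : Measure Ω) [IsProbabilityMeasure μ]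
    (p : ℝ) (hp : 0 ≤ p)
    (η : ℕ → Ω → ℝ) (hmeas : ∀ i, Measurable (η i))
    (h01 : ∀ i ω, η i ω = 0 ∨ η i ω = 1)
    (hber : ∀ i, μ {ω | η i ω = 1} = ENNReal.ofReal p)
    (hind : iIndepFun η μ)
    (C : ℕ → Prop) [DecidablePred C] (S : Finset ℕ) :
    ∫ ω, ∏ t ∈ S, (if C t then 1 - η t ω else η t ω) ∂μ
      = ∏ t ∈ S, (if C t then 1 - p else p) := by
  have hF : ∀ t, Measurable (fun x : ℝ => if C t then 1 - x else x) := by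
    intro t
    by_cases h : C t <;> simp [h] <;> fun_prop
  rw [int_prod μ η hmeas hind _ hF S]
  refine Finset.prod_congr rfl fun t _ => ?_
  obtain ⟨hint, hval⟩ := int_eta μ p hp (η t) (hmeas t) (h01 t) (hber t)
  by_cases h : C t
  · simp only [h, if_true]
    rw [integral_sub (integrable_const 1) hint, hval]
    simp
  · simp only [h, if_false, hval]

/-- Mixed moment of two consecutive grouped indicators in the (k₁,k₂)-events
construction: E[X₁X₂] = a(p)²m(m+1)/2 and Ê(X₁,X₂) = −a(p)²m(m−1)/2,
where m = k₁+k₂, a(p) = (1−p)^{k₁}p^{k₂},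
X₁ = Y_m + … + Y_{2m−1} and X₂ = Y_{2m} + … + Y_{3m−1}. -/
theorem grouped_k1k2_mixed_moment {Ω : Type*} [MeasurableSpace Ω] (μ : Measure Ω)
    [IsProbabilityMeasure μ] (p : ℝ) (hp : 0 < p) (hp1 : p < 1)
    (k₁ k₂ : ℕ) (hk₁ : 1 ≤ k₁) (hk₂ : 1 ≤ k₂)
    (η : ℕ → Ω → ℝ) (hmeas : ∀ i, Measurable (η i))
    (h01 : ∀ i ω, η i ω = 0 ∨ η i ω = 1)
    (hber : ∀ i, μ {ω | η i ω = 1} = ENNReal.ofReal p)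
    (hind : iIndepFun η μ)
    (Y : ℕ → Ω → ℝ)
    (hY : ∀ j ω, Y j ω =
      (∏ i ∈ Finset.Icc (j - (k₁ + k₂) + 1) (j - k₂), (1 - η i ω)) *
        ∏ i ∈ Finset.Icc (j - k₂ + 1) j, η i ω)
    (X₁ X₂ : Ω → ℝ)
    (hX₁ : ∀ ω, X₁ ω = ∑ j ∈ Finset.Icc (k₁ + k₂) (2 * (k₁ + k₂) - 1), Y j ω)
    (hX₂ : ∀ ω, X₂ ω = ∑ j ∈ Finset.Icc (2 * (k₁ + k₂)) (3 * (k₁ + k₂) - 1), Y j ω) :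
    (∫ ω, X₁ ω * X₂ ω ∂μ)
        = ((1 - p) ^ k₁ * p ^ k₂) ^ 2 * ((k₁ + k₂) * ((k₁ + k₂) + 1)) / 2 ∧
      (∫ ω, X₁ ω * X₂ ω ∂μ) - (∫ ω, X₁ ω ∂μ) * ∫ ω, X₂ ω ∂μ
        = -(((1 - p) ^ k₁ * p ^ k₂) ^ 2 * ((k₁ + k₂) * ((k₁ + k₂) - 1)) / 2) := by
  classical
  set m : ℕ := k₁ + k₂ with hm
  set a : ℝ := (1 - p) ^ k₁ * p ^ k₂ with ha
  have hp0 : (0 : ℝ) ≤ p := hp.le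
  have hm2 : 2 ≤ m := by omega
  -- basic facts about Y
  have hY01 : ∀ j ω, Y j ω = 0 ∨ Y j ω = 1 := by
    intro j ω; rw [hY]
    have h1 := prod01 (Finset.Icc (j - m + 1) (j - k₂)) (fun t => 1 - η t ω)
      (fun t _ => by rcases h01 t ω with h | h <;> simp [h])
    have h2 := prod01 (Finset.Icc (j - k₂ + 1) j) (fun t => η t ω) (fun t _ => h01 t ω)
    rcases h1 with h1 | h1 <;> rcases h2 with h2 | h2 <;> simp [h1, h2]
  have hYmeas : ∀ j, Measurable (Y j) := by
    intro j
    have : Y j = fun ω => (∏ i ∈ Finset.Icc (j - (k₁ + k₂) + 1) (j - k₂), (1 - η i ω)) *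
        ∏ i ∈ Finset.Icc (j - k₂ + 1) j, η i ω := funext (hY j)
    rw [this]
    exact (Finset.measurable_prod _ fun t _ => measurable_const.sub (hmeas t)).mul
      (Finset.measurable_prod _ fun t _ => hmeas t)
  have hYint : ∀ j, Integrable (Y j) μ := fun j =>
    integrable_of01 μ (Y j) (hYmeas j).aestronglyMeasurable (hY01 j)
  have hYYint : ∀ i j, Integrable (fun ω => Y i ω * Y j ω) μ := by
    intro i j
    refine integrable_of01 μ _ ((hYmeas i).mul (hYmeas j)).aestronglyMeasurable fun ω => ?_
    rcases hY01 i ω with h | h <;> rcases hY01 j ω with h' | h' <;> simp [h, h']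
  -- expectation of a single Y
  have hIY : ∀ j, m ≤ j → ∫ ω, Y j ω ∂μ = a := by
    intro j hj
    have hrw : ∀ ω, Y j ω = ∏ t ∈ Finset.Icc (j - m + 1) j,
        (if t ≤ j - k₂ then 1 - η t ω else η t ω) := by
      intro ω
      rw [hY]
      exact Y_as_prod η k₁ k₂ j hj _
        (fun t ht => by simp only [Finset.mem_Icc] at ht; omega)
        (fun t ht => by simp only [Finset.mem_Icc] at ht; omega) ω
    simp only [hrw]
    rw [int_prod_ite μ p hp0 η hmeas h01 hber hind (fun t => t ≤ j - k₂) _]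
    exact prod_const_split p k₁ k₂ j hj _
      (fun t ht => by simp only [Finset.mem_Icc] at ht; omega)
      (fun t ht => by simp only [Finset.mem_Icc] at ht; omega)
  -- expectation of a product Y i * Y j for distant i, j
  have hIYY : ∀ i j, m ≤ i → i + m ≤ j → ∫ ω, Y i ω * Y j ω ∂μ = a ^ 2 := by
    intro i j hi hij
    have hi' : m ≤ i := hi
    have hj' : m ≤ j := by omega
    set C : ℕ → Prop := fun t => t ≤ i - k₂ ∨ (i < t ∧ t ≤ j - k₂) with hC
    have hDij : Disjoint (Finset.Icc (i - m + 1) i) (Finset.Icc (j - m + 1) j) := by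
      simp only [Finset.disjoint_left, Finset.mem_Icc]; omega
    have hCi1 : ∀ t ∈ Finset.Icc (i - m + 1) (i - k₂), C t := by
      intro t ht; simp only [Finset.mem_Icc] at ht; left; omega
    have hCi2 : ∀ t ∈ Finset.Icc (i - k₂ + 1) i, ¬ C t := by
      intro t ht; simp only [Finset.mem_Icc] at ht; simp only [hC]; push_neg
      constructor <;> omega
    have hCj1 : ∀ t ∈ Finset.Icc (j - m + 1) (j - k₂), C t := by
      intro t ht; simp only [Finset.mem_Icc] at ht; right; omega
    have hCj2 : ∀ t ∈ Finset.Icc (j - k₂ + 1) j, ¬ C t := by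
      intro t ht; simp only [Finset.mem_Icc] at ht; simp only [hC]; push_neg
      constructor <;> omega
    have hrw : ∀ ω, Y i ω * Y j ω = ∏ t ∈ Finset.Icc (i - m + 1) i ∪ Finset.Icc (j - m + 1) j,
        (if C t then 1 - η t ω else η t ω) := by
      intro ω
      rw [Finset.prod_union hDij, hY, hY]
      rw [Y_as_prod η k₁ k₂ i hi' C hCi1 hCi2 ω, Y_as_prod η k₁ k₂ j hj' C hCj1 hCj2 ω]
    simp only [hrw]
    rw [int_prod_ite μ p hp0 η hmeas h01 hber hind C _]
    rw [Finset.prod_union hDij]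
    rw [prod_const_split p k₁ k₂ i hi' C hCi1 hCi2,
        prod_const_split p k₁ k₂ j hj' C hCj1 hCj2]
    ring
  -- overlapping pairs vanish
  have hzero : ∀ i j, m ≤ i → i < j → j < i + m → ∀ ω, Y i ω * Y j ω = 0 := by
    intro i j hi hij hji ω
    set t : ℕ := min i (j - k₂) with ht
    rcases h01 t ω with h0 | h1
    · have hmem : t ∈ Finset.Icc (i - k₂ + 1) i := by
        simp only [Finset.mem_Icc]; omega
      have : Y i ω = 0 := by
        rw [hY, Finset.prod_eq_zero hmem h0, mul_zero]
      rw [this, zero_mul]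
    · have hmem : t ∈ Finset.Icc (j - (k₁ + k₂) + 1) (j - k₂) := by
        simp only [Finset.mem_Icc]; omega
      have : Y j ω = 0 := by
        rw [hY, Finset.prod_eq_zero hmem (by rw [h1]; ring), zero_mul]
      rw [this, mul_zero]
  -- expectations of X₁, X₂
  have hIX₁ : ∫ ω, X₁ ω ∂μ = m * a := by
    simp only [hX₁]
    rw [integral_finset_sum _ fun j _ => hYint j]
    rw [Finset.sum_congr rfl fun j hj => hIY j (by simp only [Finset.mem_Icc] at hj; omega)]
    rw [Finset.sum_const, Nat.card_Icc, nsmul_eq_mul]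
    congr 1
    rw [show 2 * m - 1 + 1 - m = m by omega]
  have hIX₂ : ∫ ω, X₂ ω ∂μ = m * a := by
    simp only [hX₂]
    rw [integral_finset_sum _ fun j _ => hYint j]
    rw [Finset.sum_congr rfl fun j hj => hIY j (by simp only [Finset.mem_Icc] at hj; omega)]
    rw [Finset.sum_const, Nat.card_Icc, nsmul_eq_mul]
    congr 1
    rw [show 3 * m - 1 + 1 - 2 * m = m by omega]
  -- the mixed moment
  have hXX : ∫ ω, X₁ ω * X₂ ω ∂μ = a ^ 2 * (m * (m + 1)) / 2 := by
    have hexp : ∀ ω, X₁ ω * X₂ ω = ∑ i ∈ Finset.Icc m (2 * m - 1),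
        ∑ j ∈ Finset.Icc (2 * m) (3 * m - 1), Y i ω * Y j ω := by
      intro ω; rw [hX₁, hX₂, Finset.sum_mul_sum]
    simp only [hexp]
    rw [integral_finset_sum _ fun i _ => integrable_finset_sum _ fun j _ => hYYint i j]
    have hstep : ∀ i ∈ Finset.Icc m (2 * m - 1),
        (∫ ω, ∑ j ∈ Finset.Icc (2 * m) (3 * m - 1), Y i ω * Y j ω ∂μ)
          = ((2 * m - i : ℕ) : ℝ) * a ^ 2 := by
      intro i hi
      simp only [Finset.mem_Icc] at hi
      rw [integral_finset_sum _ fun j _ => hYYint i j]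
      have hterm : ∀ j ∈ Finset.Icc (2 * m) (3 * m - 1),
          (∫ ω, Y i ω * Y j ω ∂μ) = if i + m ≤ j then a ^ 2 else 0 := by
        intro j hj
        simp only [Finset.mem_Icc] at hj
        by_cases h : i + m ≤ j
        · rw [if_pos h, hIYY i j hi.1 h]
        · rw [if_neg h]
          have : ∀ ω, Y i ω * Y j ω = 0 :=
            hzero i j hi.1 (by omega) (by omega)
          simp only [this, integral_zero]
      rw [Finset.sum_congr rfl hterm]
      rw [← Finset.sum_filter]
      have hfil : (Finset.Icc (2 * m) (3 * m - 1)).filter (fun j => i + m ≤ j)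
          = Finset.Icc (i + m) (3 * m - 1) := by
        ext j; simp only [Finset.mem_filter, Finset.mem_Icc]; omega
      rw [hfil, Finset.sum_const, Nat.card_Icc, nsmul_eq_mul]
      congr 2
      omega
    rw [Finset.sum_congr rfl hstep, ← Finset.sum_mul, ← Nat.cast_sum]
    have hg := gauss_aux m (by omega)
    have h2 : ((∑ i ∈ Finset.Icc m (2 * m - 1), (2 * m - i) : ℕ) : ℝ) * 2
        = (m : ℝ) * ((m : ℝ) + 1) := by exact_mod_cast hg
    have : ((∑ i ∈ Finset.Icc m (2 * m - 1), (2 * m - i) : ℕ) : ℝ)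
        = (m : ℝ) * ((m : ℝ) + 1) / 2 := by linarith
    rw [this]
    ring
  refine ⟨?_, ?_⟩
  · rw [hXX]; simp only [hm]; push_cast; ring
  · rw [hXX, hIX₁, hIX₂]; simp only [hm]; push_cast; ring
end
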